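/- arXiv:1311.0587 — 8 statements merged into one kernel-verified Lean document; each statement's English description precedes it below -/
import Mathlib

section
/- Let {Y_j}_{j≥1} be i.i.d. copies of a real random variable Y with finite mean μ, and set \bar{Y}_d = d^{-1} Σ_{j=1}^d Y_j. Let φ: ℝ → ℝ be measurable such that |φ| is convex on ℝ and E|φ(Y)| < ∞. Then for any M > |μ|, E( |φ(\bar{Y}_d)| · 1{|\bar{Y}_d| > M} ) → 0 as d → ∞. -/
open MeasureTheory ProbabilityTheory Filter Topology

/-- `{Y_j}` i.i.d. copies of `Y` with finite mean `μY`,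
`Ȳ_d = d⁻¹ ∑_{j<d} Y_j`, `φ` measurable with `|φ|` convex on `ℝ` and `E|φ(Y)| < ∞`.
Then for any `M > |μY|`, `E(|φ(Ȳ_d)| 1{|Ȳ_d| > M}) → 0` as `d → ∞`. -/
theorem stmt_1 {Ω : Type*} [MeasurableSpace Ω] (μ : Measure Ω) [IsProbabilityMeasure μ]
    (Y : ℕ → Ω → ℝ) (μY : ℝ)
    (hYmeas : ∀ j, Measurable (Y j))
    (hindep : iIndepFun Y μ)
    (hident : ∀ j, IdentDistrib (Y j) (Y 0) μ μ)
    (hintY : Integrable (Y 0) μ)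
    (hmean : μY = ∫ ω, Y 0 ω ∂μ)
    (φ : ℝ → ℝ) (hφ : Measurable φ)
    (hconv : ConvexOn ℝ Set.univ (fun x => |φ x|))
    (hintφ : Integrable (fun ω => |φ (Y 0 ω)|) μ)
    (M : ℝ) (hM : |μY| < M) :
    Tendsto
      (fun d => ∫ ω in {ω | M < |(∑ j ∈ Finset.range d, Y j ω) / d|},
        |φ ((∑ j ∈ Finset.range d, Y j ω) / d)| ∂μ)
      atTop (nhds (0 : ℝ)) := by
  set S : ℕ → Ω → ℝ := fun d ω => (∑ j ∈ Finset.range d, Y j ω) / d with hS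
  set A : ℕ → Set Ω := fun d => {ω | M < |S d ω|} with hA
  have hSmeas : ∀ d, Measurable (S d) := fun d =>
    (Finset.measurable_sum _ (fun j _ => hYmeas j)).div_const _
  have hAmeas : ∀ d, MeasurableSet (A d) :=
    fun d => measurableSet_lt measurable_const (hSmeas d).abs
  -- truncation functions
  set hfun : ℕ → ℝ → ℝ := fun K x => if (K : ℝ) < |φ x| then |φ x| else 0 with hhfun
  have hfun_meas : ∀ K, Measurable (hfun K) := fun K =>
    Measurable.ite (measurableSet_lt measurable_const hφ.abs) hφ.abs measurable_const
  have hfun_nonneg : ∀ K x, 0 ≤ hfun K x := by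
    intro K x
    simp only [hhfun]
    split
    · exact abs_nonneg _
    · exact le_refl _
  have hfun_le : ∀ K x, hfun K x ≤ |φ x| := by
    intro K x
    simp only [hhfun]
    split
    · exact le_refl _
    · exact abs_nonneg _
  -- integrability of |φ (Y j)|
  have hintφj : ∀ j, Integrable (fun ω => |φ (Y j ω)|) μ := fun j =>
    ((hident j).comp hφ.abs).integrable_iff.mpr hintφ
  have hint_hfun : ∀ K j, Integrable (fun ω => hfun K (Y j ω)) μ := by
    intro K j
    refine (hintφj j).mono ((hfun_meas K).comp (hYmeas j)).aestronglyMeasurable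
      (ae_of_all _ fun ω => ?_)
    rw [Real.norm_eq_abs, abs_of_nonneg (hfun_nonneg K _), Real.norm_eq_abs, abs_abs]
    exact hfun_le K _
  -- truncated integrals are equal across j
  set T : ℕ → ℝ := fun K => ∫ ω, hfun K (Y 0 ω) ∂μ with hT
  have hTj : ∀ K j, ∫ ω, hfun K (Y j ω) ∂μ = T K := fun K j =>
    ((hident j).comp (hfun_meas K)).integral_eq
  -- truncation tends to zero
  have hTtendsto : Tendsto T atTop (𝓝 0) := by
    have hlim : ∀ᵐ ω ∂μ, Tendsto (fun K : ℕ => hfun K (Y 0 ω)) atTop (𝓝 (0 : ℝ)) := by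
      refine ae_of_all _ fun ω => ?_
      obtain ⟨N, hN⟩ := exists_nat_ge (|φ (Y 0 ω)|)
      refine tendsto_const_nhds.congr' ?_
      filter_upwards [eventually_ge_atTop N] with K hK
      have hnot : ¬ ((K : ℝ) < |φ (Y 0 ω)|) :=
        not_lt.mpr (hN.trans (by exact_mod_cast hK))
      simp [hhfun, hnot]
    have := tendsto_integral_of_dominated_convergence (μ := μ)
      (F := fun K ω => hfun K (Y 0 ω)) (f := fun _ => (0 : ℝ))
      (fun ω => |φ (Y 0 ω)|)
      (fun K => ((hfun_meas K).comp (hYmeas 0)).aestronglyMeasurable)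
      hintφ
      (fun K => ae_of_all _ fun ω => by
        rw [Real.norm_eq_abs, abs_of_nonneg (hfun_nonneg K _)]
        exact hfun_le K _)
      hlim
    simpa using this
  -- measure of A d tends to zero
  have hmA : Tendsto (fun d => (μ (A d)).toReal) atTop (𝓝 0) := by
    have hslln : ∀ᵐ ω ∂μ, Tendsto (fun d => S d ω) atTop (𝓝 μY) := by
      rw [hmean]
      exact strong_law_ae_real Y hintY (fun i j hij => hindep.indepFun hij) hident
    have htim : TendstoInMeasure μ S atTop (fun _ => μY) :=
      tendstoInMeasure_of_tendsto_ae (fun d => (hSmeas d).aestronglyMeasurable) hslln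
    have hε : (0 : ℝ) < M - |μY| := by linarith
    have h1 : Tendsto (fun d => μ {ω | M - |μY| ≤ dist (S d ω) μY}) atTop (𝓝 0) :=
      by
        have := htim (ENNReal.ofReal (M - |μY|)) (ENNReal.ofReal_pos.mpr hε)
        simpa only [edist_dist, ENNReal.ofReal_le_ofReal_iff dist_nonneg] using this
    have h2 : Tendsto (fun d => μ (A d)) atTop (𝓝 0) := by
      refine tendsto_of_tendsto_of_tendsto_of_le_of_le tendsto_const_nhds h1
        (fun d => zero_le) (fun d => measure_mono ?_)
      intro ω hω
      simp only [hA, Set.mem_setOf_eq] at hω ⊢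
      rw [Real.dist_eq]
      have h3 : |S d ω| - |μY| ≤ |S d ω - μY| := abs_sub_abs_le_abs_sub _ _
      linarith
    simpa [Function.comp_def] using (ENNReal.tendsto_toReal (a := 0) (by simp)).comp h2
  -- Jensen pointwise bound and main estimate
  have hmain : ∀ (K : ℕ) (d : ℕ), 1 ≤ d →
      (∫ ω in A d, |φ (S d ω)| ∂μ) ≤ (K : ℝ) * (μ (A d)).toReal + T K := by
    intro K d hd
    have hdpos : (0 : ℝ) < d := by exact_mod_cast hd
    have hpt : ∀ ω, |φ (S d ω)| ≤ (K : ℝ) + (∑ j ∈ Finset.range d, hfun K (Y j ω)) / d := by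
      intro ω
      have hjensen : |φ (S d ω)| ≤ ∑ j ∈ Finset.range d, (d : ℝ)⁻¹ * |φ (Y j ω)| := by
        have hsum : ∑ _j ∈ Finset.range d, (d : ℝ)⁻¹ = 1 := by
          rw [Finset.sum_const, Finset.card_range, nsmul_eq_mul, mul_inv_cancel₀ hdpos.ne']
        have hJ := hconv.map_sum_le (t := Finset.range d) (w := fun _ => (d : ℝ)⁻¹)
          (p := fun j => Y j ω) (fun _ _ => by positivity) hsum (fun _ _ => Set.mem_univ _)
        simp only [smul_eq_mul] at hJ
        have heq : S d ω = ∑ j ∈ Finset.range d, (d : ℝ)⁻¹ * Y j ω := by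
          rw [← Finset.mul_sum, hS]
          ring
        rw [heq]
        exact hJ
      have hbd : ∑ j ∈ Finset.range d, (d : ℝ)⁻¹ * |φ (Y j ω)|
          ≤ ∑ j ∈ Finset.range d, (d : ℝ)⁻¹ * ((K : ℝ) + hfun K (Y j ω)) := by
        refine Finset.sum_le_sum fun j _ => ?_
        refine mul_le_mul_of_nonneg_left ?_ (by positivity)
        by_cases h : (K : ℝ) < |φ (Y j ω)|
        · simp only [hhfun, if_pos h]
          have hK0 : (0 : ℝ) ≤ K := Nat.cast_nonneg K
          linarith
        · simp only [hhfun, if_neg h]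
          push_neg at h
          linarith
      refine hjensen.trans (hbd.trans ?_)
      rw [← Finset.mul_sum, Finset.sum_add_distrib, Finset.sum_const, Finset.card_range,
        nsmul_eq_mul, mul_add, ← mul_assoc, inv_mul_cancel₀ hdpos.ne', one_mul,
        inv_mul_eq_div]
    set g : Ω → ℝ := fun ω => (K : ℝ) + (∑ j ∈ Finset.range d, hfun K (Y j ω)) / d with hg
    have hgint : Integrable g μ :=
      (integrable_const _).add ((integrable_finset_sum _ (fun j _ => hint_hfun K j)).div_const _)
    have hφSint : Integrable (fun ω => |φ (S d ω)|) μ := by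
      refine hgint.mono ((hφ.comp (hSmeas d)).abs).aestronglyMeasurable
        (ae_of_all _ fun ω => ?_)
      rw [Real.norm_eq_abs, abs_abs, Real.norm_eq_abs]
      exact (hpt ω).trans (le_abs_self _)
    calc (∫ ω in A d, |φ (S d ω)| ∂μ) ≤ ∫ ω in A d, g ω ∂μ :=
          setIntegral_mono_on hφSint.integrableOn hgint.integrableOn (hAmeas d)
            (fun ω _ => hpt ω)
      _ = (K : ℝ) * (μ (A d)).toReal
            + (∑ j ∈ Finset.range d, ∫ ω in A d, hfun K (Y j ω) ∂μ) / d := by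
          rw [hg, integral_add (integrableOn_const (s := A d) (μ := μ) (C := (K : ℝ)) (measure_ne_top _ _))
            (((integrable_finset_sum _ (fun j _ => hint_hfun K j)).div_const _).integrableOn),
            setIntegral_const, integral_div,
            integral_finset_sum _ (fun j _ => (hint_hfun K j).integrableOn),
            smul_eq_mul, mul_comm, measureReal_def]
      _ ≤ (K : ℝ) * (μ (A d)).toReal + (∑ _j ∈ Finset.range d, T K) / d := by
          gcongr with j hj
          rw [← hTj K j]
          exact setIntegral_le_integral (hint_hfun K j)
            (ae_of_all _ fun ω => hfun_nonneg K _)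
      _ = (K : ℝ) * (μ (A d)).toReal + T K := by
          rw [Finset.sum_const, Finset.card_range, nsmul_eq_mul,
            mul_div_cancel_left₀ _ hdpos.ne']
  -- conclusion
  rw [NormedAddCommGroup.tendsto_nhds_zero]
  intro ε hε
  obtain ⟨K, hK⟩ : ∃ K, T K < ε / 2 :=
    (hTtendsto.eventually (gt_mem_nhds (by linarith : (0 : ℝ) < ε / 2))).exists
  have h2 : ∀ᶠ d in atTop, (K : ℝ) * (μ (A d)).toReal < ε / 2 := by
    have hmul : Tendsto (fun d => (K : ℝ) * (μ (A d)).toReal) atTop (𝓝 0) := by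
      simpa using hmA.const_mul (K : ℝ)
    exact hmul.eventually (gt_mem_nhds (by linarith))
  filter_upwards [h2, eventually_ge_atTop 1] with d hd2 hd1
  have hnn : 0 ≤ ∫ ω in A d, |φ (S d ω)| ∂μ :=
    setIntegral_nonneg (hAmeas d) (fun ω _ => abs_nonneg _)
  rw [Real.norm_eq_abs, abs_of_nonneg hnn]
  calc (∫ ω in A d, |φ (S d ω)| ∂μ) ≤ (K : ℝ) * (μ (A d)).toReal + T K := hmain K d hd1
    _ < ε := by linarith
end

section
/- Fix p > 0 and r > 0 with r/p < 1. Let X = (X_1, …, X_d) be a random vector with i.i.d. components distributed as a real random variable X with E|X|^p < ∞, and set μ_p = E|X|^p. Then E‖X‖_p^r / d^{r/p} → μ_p^{r/p} as d → ∞. -/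
open MeasureTheory ProbabilityTheory Filter
open scoped ENNReal NNReal Topology

lemma my_rpow_add_le {s : ℝ} (hs0 : 0 ≤ s) (hs1 : s ≤ 1) {a b : ℝ} (ha : 0 ≤ a) (hb : 0 ≤ b) :
    (a + b) ^ s ≤ a ^ s + b ^ s := by
  have h := NNReal.rpow_add_le_add_rpow a.toNNReal b.toNNReal hs0 hs1
  have h2 := NNReal.coe_le_coe.2 h
  push_cast at h2
  rwa [Real.coe_toNNReal a ha, Real.coe_toNNReal b hb] at h2

lemma my_abs_rpow_sub {s : ℝ} (hs0 : 0 ≤ s) (hs1 : s ≤ 1) {x y : ℝ} (hx : 0 ≤ x) (hy : 0 ≤ y) :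
    |x ^ s - y ^ s| ≤ |x - y| ^ s := by
  wlog h : y ≤ x generalizing x y
  · rw [abs_sub_comm, abs_sub_comm x y]; exact this hy hx (le_of_not_ge h)
  have key : x ^ s ≤ y ^ s + (x - y) ^ s := by
    have := my_rpow_add_le hs0 hs1 hy (sub_nonneg.2 h)
    simpa using this
  rw [abs_of_nonneg (sub_nonneg.2 h)]
  rw [abs_sub_le_iff]
  constructor
  · linarith
  · have : y ^ s ≤ x ^ s := Real.rpow_le_rpow hy h hs0
    have h0 : 0 ≤ (x - y) ^ s := Real.rpow_nonneg (sub_nonneg.2 h) s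
    linarith

lemma my_rpow_le_one_add {s x : ℝ} (hs0 : 0 < s) (hs1 : s ≤ 1) (hx : 0 ≤ x) :
    x ^ s ≤ 1 + x := by
  rcases le_total x 1 with h | h
  · exact le_trans (Real.rpow_le_one hx h hs0.le) (le_add_of_nonneg_right hx)
  · have : x ^ s ≤ x ^ (1 : ℝ) := Real.rpow_le_rpow_of_exponent_le h hs1
    rw [Real.rpow_one] at this
    linarith

lemma my_jensen {Ω : Type*} [MeasurableSpace Ω] {μ : Measure Ω} [IsProbabilityMeasure μ]
    {f : Ω → ℝ} (hf : Integrable f μ) {s : ℝ} (hs : 0 < s) (hs1 : s ≤ 1) :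
    ∫ ω, |f ω| ^ s ∂μ ≤ (∫ ω, |f ω| ∂μ) ^ s := by
  set A : ℝ≥0∞ := ∫⁻ ω, ‖f ω‖₊ ∂μ with hA
  have hAne : A ≠ ∞ := hf.2.ne
  have h1 : eLpNorm f (ENNReal.ofReal s) μ ≤ eLpNorm f 1 μ :=
    eLpNorm_le_eLpNorm_of_exponent_le (by exact ENNReal.ofReal_le_one.2 hs1) hf.1
  have h2 : eLpNorm f 1 μ = A := eLpNorm_one_eq_lintegral_enorm
  have h3 : eLpNorm f (ENNReal.ofReal s) μ
      = (∫⁻ ω, (‖f ω‖₊ : ℝ≥0∞) ^ s ∂μ) ^ (1 / s) := by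
    rw [eLpNorm_eq_lintegral_rpow_enorm_toReal (ENNReal.ofReal_pos.2 hs).ne' ENNReal.ofReal_ne_top]
    simp [ENNReal.toReal_ofReal hs.le]
    rfl
  set B : ℝ≥0∞ := ∫⁻ ω, (‖f ω‖₊ : ℝ≥0∞) ^ s ∂μ with hB
  have h4 : B ≤ A ^ s := by
    have := ENNReal.rpow_le_rpow (h3 ▸ h2 ▸ h1) hs.le
    rwa [← ENNReal.rpow_mul, one_div_mul_cancel hs.ne', ENNReal.rpow_one] at this
  have hmeas : AEStronglyMeasurable (fun ω => |f ω| ^ s) μ :=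
    (Real.continuous_rpow_const hs.le).comp_aestronglyMeasurable
      (continuous_abs.comp_aestronglyMeasurable hf.1)
  have lhs_eq : ∫ ω, |f ω| ^ s ∂μ = B.toReal := by
    rw [integral_eq_lintegral_of_nonneg_ae
      (Filter.Eventually.of_forall fun ω => Real.rpow_nonneg (abs_nonneg _) s) hmeas]
    congr 1
    refine lintegral_congr fun ω => ?_
    change _ = ‖f ω‖ₑ ^ s
    rw [Real.enorm_eq_ofReal_abs, ENNReal.ofReal_rpow_of_nonneg (abs_nonneg _) hs.le]
  have rhs_eq : ∫ ω, |f ω| ∂μ = A.toReal := by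
    have := integral_norm_eq_lintegral_enorm hf.1
    simp only [Real.norm_eq_abs] at this
    exact this
  rw [lhs_eq, rhs_eq, ENNReal.toReal_rpow]
  exact ENNReal.toReal_mono (ENNReal.rpow_ne_top_of_nonneg hs.le hAne) h4

/-- Fix `p > 0`, `r > 0` with `r/p < 1`.  `X = (X_1, …, X_d)` has i.i.d.
components distributed as `X` with `E|X|^p < ∞`, `μ_p = E|X|^p`.  Then
`E‖X‖_p^r / d^{r/p} → μ_p^{r/p}` as `d → ∞`, where `‖x‖_p = (∑_{j<d} |x_j|^p)^{1/p}`. -/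
theorem stmt_3 {Ω : Type*} [MeasurableSpace Ω] (μ : Measure Ω) [IsProbabilityMeasure μ]
    (X : ℕ → Ω → ℝ)
    (hXmeas : ∀ j, Measurable (X j))
    (hindep : iIndepFun X μ)
    (hident : ∀ j, IdentDistrib (X j) (X 0) μ μ)
    (p r : ℝ) (hp : 0 < p) (hr : 0 < r) (hrp : r / p < 1)
    (hmom : Integrable (fun ω => |X 0 ω| ^ p) μ)
    (μp : ℝ) (hμp : μp = ∫ ω, |X 0 ω| ^ p ∂μ) :
    Tendsto
      (fun d : ℕ =>
        (∫ ω, ((∑ j ∈ Finset.range d, |X j ω| ^ p) ^ (1 / p)) ^ r ∂μ) / (d : ℝ) ^ (r / p))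
      atTop (nhds (μp ^ (r / p))) := by
  have hs0 : 0 < r / p := div_pos hr hp
  have hs1 : r / p ≤ 1 := hrp.le
  set s : ℝ := r / p with hsdef
  set Y : ℕ → Ω → ℝ := fun j ω => |X j ω| ^ p with hYdef
  have hg : Measurable fun x : ℝ => |x| ^ p :=
    (Real.continuous_rpow_const hp.le).measurable.comp measurable_abs
  have hYint : ∀ j, Integrable (Y j) μ := fun j => ((hident j).comp hg).integrable_iff.2 hmom
  have hYnonneg : ∀ j ω, 0 ≤ Y j ω := fun j ω => Real.rpow_nonneg (abs_nonneg _) p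
  have hμp0 : 0 ≤ μp := hμp ▸ integral_nonneg fun ω => hYnonneg 0 ω
  -- the averages
  set h : ℕ → Ω → ℝ := fun n ω => (∑ j ∈ Finset.range n, Y j ω) / n with hhdef
  have hhnonneg : ∀ n ω, 0 ≤ h n ω := fun n ω =>
    div_nonneg (Finset.sum_nonneg fun j _ => hYnonneg j ω) (Nat.cast_nonneg n)
  have hhint : ∀ n, Integrable (h n) μ := fun n =>
    (integrable_finset_sum _ fun j _ => hYint j).div_const _
  -- L¹ strong law
  have hYindep : Pairwise (Function.onFun (IndepFun · · μ) Y) := fun i j hij =>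
    (hindep.indepFun hij).comp hg hg
  have hYident : ∀ i, IdentDistrib (Y i) (Y 0) μ μ := fun i => (hident i).comp hg
  have T := ProbabilityTheory.strong_law_Lp (le_refl (1 : ℝ≥0∞)) ENNReal.one_ne_top Y
    (memLp_one_iff_integrable.2 (hYint 0)) hYindep hYident
  set B : ℕ → ℝ := fun n => ∫ ω, |h n ω - μp| ∂μ with hBdef
  have hBtends : Tendsto B atTop (𝓝 0) := by
    have hfun : ∀ n : ℕ, B n =
        (eLpNorm (fun ω => (n : ℝ)⁻¹ • (∑ i ∈ Finset.range n, Y i ω) - μ[Y 0]) 1 μ).toReal := by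
      intro n
      have heq : (fun ω => (n : ℝ)⁻¹ • (∑ i ∈ Finset.range n, Y i ω) - μ[Y 0])
          = fun ω => h n ω - μp := by
        funext ω
        simp only [smul_eq_mul, hhdef]
        rw [inv_mul_eq_div, ← hμp]
      rw [heq, eLpNorm_one_eq_lintegral_enorm, hBdef]
      have := integral_norm_eq_lintegral_enorm ((hhint n).sub (integrable_const μp)).1
      simpa [Real.norm_eq_abs] using this
    have T2 := (ENNReal.tendsto_toReal ENNReal.zero_ne_top).comp T
    simp only [ENNReal.toReal_zero] at T2
    exact Tendsto.congr (fun n => (hfun n).symm) T2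
  -- integrability of the powers
  have hint1 : ∀ n, Integrable (fun ω => h n ω ^ s) μ := by
    intro n
    refine Integrable.mono' ((integrable_const 1).add (hhint n))
      ((Real.continuous_rpow_const hs0.le).comp_aestronglyMeasurable (hhint n).1) ?_
    refine Filter.Eventually.of_forall fun ω => ?_
    rw [Real.norm_eq_abs, abs_of_nonneg (Real.rpow_nonneg (hhnonneg n ω) s)]
    exact my_rpow_le_one_add hs0 hs1 (hhnonneg n ω)
  have hint2 : ∀ n, Integrable (fun ω => |h n ω - μp| ^ s) μ := by
    intro n
    refine Integrable.mono' ((integrable_const 1).add ((hhint n).sub (integrable_const μp)).abs)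
      ((Real.continuous_rpow_const hs0.le).comp_aestronglyMeasurable
        (continuous_abs.comp_aestronglyMeasurable ((hhint n).sub (integrable_const μp)).1)) ?_
    refine Filter.Eventually.of_forall fun ω => ?_
    rw [Real.norm_eq_abs, abs_of_nonneg (Real.rpow_nonneg (abs_nonneg _) s)]
    exact my_rpow_le_one_add hs0 hs1 (abs_nonneg _)
  -- key estimate
  have hEst : ∀ n, |(∫ ω, h n ω ^ s ∂μ) - μp ^ s| ≤ B n ^ s := by
    intro n
    calc |(∫ ω, h n ω ^ s ∂μ) - μp ^ s|
        = |∫ ω, (h n ω ^ s - μp ^ s) ∂μ| := by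
          rw [integral_sub (hint1 n) (integrable_const _), integral_const, probReal_univ,
            one_smul]
      _ ≤ ∫ ω, |h n ω ^ s - μp ^ s| ∂μ := by
          simpa [Real.norm_eq_abs] using norm_integral_le_integral_norm fun ω => h n ω ^ s - μp ^ s
      _ ≤ ∫ ω, |h n ω - μp| ^ s ∂μ := by
          refine integral_mono ((hint1 n).sub (integrable_const _)).abs (hint2 n) fun ω => ?_
          exact my_abs_rpow_sub hs0.le hs1 (hhnonneg n ω) hμp0
      _ ≤ (∫ ω, |h n ω - μp| ∂μ) ^ s :=
          my_jensen ((hhint n).sub (integrable_const μp)) hs0 hs1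
      _ = B n ^ s := rfl
  have hPB : Tendsto (fun n => B n ^ s) atTop (𝓝 0) := by
    have := hBtends.rpow_const (Or.inr hs0.le)
    rwa [Real.zero_rpow hs0.ne'] at this
  have hmain : Tendsto (fun n => ∫ ω, h n ω ^ s ∂μ) atTop (𝓝 (μp ^ s)) := by
    rw [← tendsto_sub_nhds_zero_iff]
    exact squeeze_zero_norm (fun n => by simpa [Real.norm_eq_abs] using hEst n) hPB
  refine hmain.congr' ?_
  filter_upwards [eventually_ge_atTop 1] with n hn
  have hnpos : (0 : ℝ) < n := by exact_mod_cast hn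
  have key : ∀ ω, ((∑ j ∈ Finset.range n, |X j ω| ^ p) ^ (1 / p)) ^ r
      = (∑ j ∈ Finset.range n, Y j ω) ^ s := by
    intro ω
    have hSnn : 0 ≤ ∑ j ∈ Finset.range n, Y j ω :=
      Finset.sum_nonneg fun j _ => hYnonneg j ω
    rw [← Real.rpow_mul hSnn, hsdef]
    congr 1
    ring
  calc ∫ ω, h n ω ^ s ∂μ
      = ∫ ω, (∑ j ∈ Finset.range n, Y j ω) ^ s / (n : ℝ) ^ s ∂μ := by
        refine integral_congr_ae (Filter.Eventually.of_forall fun ω => ?_)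
        rw [hhdef]
        exact Real.div_rpow (Finset.sum_nonneg fun j _ => hYnonneg j ω) (Nat.cast_nonneg n) s
    _ = (∫ ω, (∑ j ∈ Finset.range n, Y j ω) ^ s ∂μ) / (n : ℝ) ^ s := integral_div _ _
    _ = (∫ ω, ((∑ j ∈ Finset.range n, |X j ω| ^ p) ^ (1 / p)) ^ r ∂μ) / (n : ℝ) ^ s := by
        congr 1
        exact integral_congr_ae (Filter.Eventually.of_forall fun ω => (key ω).symm)
end

section
/- Fix p > 0 and r > 0 with r/p < 1. Let X = (X_1, …, X_d) be a random vector with i.i.d. components distributed as a real random variable X with E|X|^p = ∞. Then E‖X‖_p^r / d^{r/p} → ∞ as d → ∞. -/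
open MeasureTheory ProbabilityTheory Filter
open scoped ENNReal

/-- Fix `p > 0`, `r > 0` with `r/p < 1`.  `X = (X_1, …, X_d)` has i.i.d.
components distributed as `X` with `E|X|^p = ∞`.  Then `E‖X‖_p^r / d^{r/p} → ∞`
as `d → ∞` (expectations taken in `[0, ∞]`). -/
theorem stmt_4 {Ω : Type*} [MeasurableSpace Ω] (μ : Measure Ω) [IsProbabilityMeasure μ]
    (X : ℕ → Ω → ℝ)
    (hXmeas : ∀ j, Measurable (X j))
    (hindep : iIndepFun X μ)
    (hident : ∀ j, IdentDistrib (X j) (X 0) μ μ)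
    (p r : ℝ) (hp : 0 < p) (hr : 0 < r) (hrp : r / p < 1)
    (hmom : ∫⁻ ω, ENNReal.ofReal (|X 0 ω| ^ p) ∂μ = ⊤) :
    Tendsto
      (fun d : ℕ =>
        (∫⁻ ω, ENNReal.ofReal (((∑ j ∈ Finset.range d, |X j ω| ^ p) ^ (1 / p)) ^ r) ∂μ) /
          ENNReal.ofReal ((d : ℝ) ^ (r / p)))
      atTop (nhds (⊤ : ENNReal)) := by
  have hq0 : 0 < r / p := div_pos hr hp
  set q : ℝ := r / p with hqdef
  -- measurability of the basic building blocks
  have hYm : ∀ j, Measurable fun ω => |X j ω| ^ p := fun j =>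
    (Real.continuous_rpow_const hp.le).measurable.comp (hXmeas j).abs
  -- rewrite the integrand
  have hrw : ∀ d : ℕ, ∀ ω : Ω, (((∑ j ∈ Finset.range d, |X j ω| ^ p) ^ (1 / p)) ^ r)
      = (∑ j ∈ Finset.range d, |X j ω| ^ p) ^ q := by
    intro d ω
    have h0 : (0:ℝ) ≤ ∑ j ∈ Finset.range d, |X j ω| ^ p :=
      Finset.sum_nonneg fun j _ => Real.rpow_nonneg (abs_nonneg _) p
    rw [← Real.rpow_mul h0]
    congr 1
    rw [hqdef]
    field_simp
  simp only [hrw]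
  apply ENNReal.tendsto_nhds_top
  intro n
  -- the threshold we want the truncated mean to exceed
  set B : ℝ := 2 * (2 * ((n:ℝ) + 1)) ^ (1/q) with hBdef
  have ha0 : (0:ℝ) ≤ 2 * ((n:ℝ) + 1) := by positivity
  have hB0 : 0 < B := by
    have := Real.rpow_pos_of_pos (show (0:ℝ) < 2 * ((n:ℝ) + 1) by positivity) (1/q)
    positivity
  -- monotone convergence: truncated expectations tend to ⊤
  have hsup : (⨆ M : ℕ, ∫⁻ ω, ENNReal.ofReal (min (|X 0 ω| ^ p) (M:ℝ)) ∂μ) = ⊤ := by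
    have hmono : Monotone (fun (M:ℕ) (ω:Ω) => ENNReal.ofReal (min (|X 0 ω| ^ p) (M:ℝ))) := by
      intro M N hMN ω
      exact ENNReal.ofReal_le_ofReal (min_le_min le_rfl (by exact_mod_cast hMN))
    rw [← lintegral_iSup (fun M => ((hYm 0).min measurable_const).ennreal_ofReal) hmono, ← hmom]
    refine lintegral_congr fun ω => ?_
    refine le_antisymm (iSup_le fun M => ENNReal.ofReal_le_ofReal (min_le_left _ _)) ?_
    refine le_iSup_of_le ⌈|X 0 ω| ^ p⌉₊ ?_
    rw [min_eq_left (Nat.le_ceil _)]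
  obtain ⟨M, hM⟩ := iSup_eq_top.1 hsup (ENNReal.ofReal B) ENNReal.ofReal_lt_top
  -- truncated variables
  set Z : ℕ → Ω → ℝ := fun j ω => min (|X j ω| ^ p) (M:ℝ) with hZdef
  have hg : Measurable fun x : ℝ => min (|x| ^ p) (M:ℝ) :=
    ((Real.continuous_rpow_const hp.le).measurable.comp measurable_abs).min measurable_const
  have hZmeas : ∀ j, Measurable (Z j) := fun j => hg.comp (hXmeas j)
  have hZnonneg : ∀ j ω, 0 ≤ Z j ω := fun j ω =>
    le_min (Real.rpow_nonneg (abs_nonneg _) _) (Nat.cast_nonneg M)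
  have hZle : ∀ j ω, Z j ω ≤ (M:ℝ) := fun j ω => min_le_right _ _
  have hZmem : ∀ j, MemLp (Z j) 2 μ := fun j =>
    MemLp.of_bound (hZmeas j).aestronglyMeasurable (M:ℝ)
      (Eventually.of_forall fun ω => by
        rw [Real.norm_eq_abs, abs_of_nonneg (hZnonneg j ω)]; exact hZle j ω)
  have hZint : ∀ j, Integrable (Z j) μ := fun j => (hZmem j).integrable one_le_two
  set m : ℝ := ∫ ω, Z 0 ω ∂μ with hmdef
  have hident' : ∀ j, IdentDistrib (Z j) (Z 0) μ μ := fun j => (hident j).comp hg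
  have hEZ : ∀ j, ∫ ω, Z j ω ∂μ = m := fun j => (hident' j).integral_eq
  have hmB : B < m := by
    have hor : ENNReal.ofReal m = ∫⁻ ω, ENNReal.ofReal (Z 0 ω) ∂μ :=
      ofReal_integral_eq_lintegral_ofReal (hZint 0) (ae_of_all _ (hZnonneg 0))
    rw [← hor] at hM
    exact (ENNReal.ofReal_lt_ofReal_iff_of_nonneg hB0.le).1 hM
  have hm0 : 0 < m := hB0.trans hmB
  -- variance bound
  set v : ℝ := variance (Z 0) μ with hvdef
  have hv : v ≤ (M:ℝ)^2 := by
    refine (variance_le_expectation_sq (hZmeas 0).aestronglyMeasurable).trans ?_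
    have hle : ∫ ω, (Z 0 ^ 2) ω ∂μ ≤ ∫ _ω, ((M:ℝ)^2) ∂μ := by
      refine integral_mono (hZmem 0).integrable_sq (integrable_const _) fun ω => ?_
      simpa using pow_le_pow_left₀ (hZnonneg 0 ω) (hZle 0 ω) 2
    simpa [measure_univ] using hle
  have hv0 : 0 ≤ v := variance_nonneg _ _
  -- independence of the truncated variables
  have hZindep : iIndepFun Z μ :=
    hindep.comp (fun _ x => min (|x| ^ p) (M:ℝ)) (fun _ => hg)
  -- choose d₀
  set d₀ : ℕ := max 1 ⌈8*(M:ℝ)^2/m^2⌉₊ with hd₀def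
  filter_upwards [eventually_ge_atTop d₀] with d hd
  have hd1 : 1 ≤ d := le_trans (le_max_left _ _) hd
  have hdpos : (0:ℝ) < d := by exact_mod_cast hd1
  have hd2 : 8*(M:ℝ)^2/m^2 ≤ d := by
    refine le_trans ?_ (Nat.cast_le.2 (le_trans (le_max_right _ _) hd))
    exact Nat.le_ceil _
  -- sum of truncated variables
  set T : Ω → ℝ := ∑ j ∈ Finset.range d, Z j with hTdef
  have hTapp : ∀ ω, T ω = ∑ j ∈ Finset.range d, Z j ω := by
    intro ω; simp [hTdef]
  have hTmeas : Measurable T := by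
    have : Measurable fun ω => ∑ j ∈ Finset.range d, Z j ω :=
      Finset.measurable_sum _ fun j _ => hZmeas j
    simpa [funext hTapp] using this
  have hTmem : MemLp T 2 μ := memLp_finset_sum' _ fun j _ => hZmem j
  have hET : μ[T] = d * m := by
    rw [hTdef]
    simp only [Finset.sum_apply]
    rw [integral_finset_sum _ fun j _ => hZint j]
    simp [hEZ, Finset.sum_const, Finset.card_range, nsmul_eq_mul]
  have hVarT : variance T μ = d * v := by
    rw [hTdef, IndepFun.variance_sum (fun j _ => hZmem j)
      (fun i _ j _ hij => hZindep.indepFun hij)]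
    rw [Finset.sum_congr rfl fun j _ => (hident' j).variance_eq]
    simp [Finset.sum_const, Finset.card_range, nsmul_eq_mul, hvdef]
  -- Chebyshev
  set c : ℝ := d * m / 2 with hcdef
  have hc : 0 < c := by positivity
  have hcheb : μ {ω | c ≤ |T ω - d * m|} ≤ ENNReal.ofReal (d * v / c^2) := by
    have := meas_ge_le_variance_div_sq (μ := μ) hTmem hc
    rwa [hET, hVarT] at this
  -- probability of the good event is at least 1/2
  have h8 : 8*(M:ℝ)^2 ≤ d * m^2 := by
    rw [div_le_iff₀ (by positivity)] at hd2; linarith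
  have hεle : d * v / c^2 ≤ 1/2 := by
    have h1 : (d:ℝ) * v ≤ d * (M:ℝ)^2 := by gcongr
    rw [div_le_iff₀ (by positivity), hcdef]
    nlinarith [mul_le_mul_of_nonneg_left h8 hdpos.le]
  set Bs : Set Ω := {ω | c ≤ |T ω - d * m|} with hBsdef
  have hBmeas : MeasurableSet Bs :=
    measurableSet_le measurable_const ((hTmeas.sub measurable_const).abs)
  have hhalf : ENNReal.ofReal (1/2 : ℝ) = (2:ℝ≥0∞)⁻¹ := by
    rw [one_div, ENNReal.ofReal_inv_of_pos two_pos, ENNReal.ofReal_ofNat]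
  have hμBc : (2:ℝ≥0∞)⁻¹ ≤ μ Bsᶜ := by
    rw [prob_compl_eq_one_sub hBmeas]
    have hμB : μ Bs ≤ 2⁻¹ := by
      refine hcheb.trans ?_
      rw [← hhalf]
      exact ENNReal.ofReal_le_ofReal hεle
    refine ENNReal.le_sub_of_add_le_left (ne_top_of_le_ne_top (by norm_num) hμB) ?_
    calc μ Bs + 2⁻¹ ≤ 2⁻¹ + 2⁻¹ := by gcongr
      _ = 1 := ENNReal.inv_two_add_inv_two
  -- pointwise lower bound on the good event
  have hpoint : ∀ ω ∈ Bsᶜ, ENNReal.ofReal (c ^ q)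
      ≤ ENNReal.ofReal ((∑ j ∈ Finset.range d, |X j ω| ^ p) ^ q) := by
    intro ω hω
    have h1 : |T ω - d * m| < c := not_le.1 hω
    have h2 : c ≤ T ω := by
      have h3 := (abs_lt.1 h1).1
      rw [hcdef] at h3 ⊢; linarith
    have h3 : T ω ≤ ∑ j ∈ Finset.range d, |X j ω| ^ p := by
      rw [hTapp]
      exact Finset.sum_le_sum fun j _ => min_le_left _ _
    exact ENNReal.ofReal_le_ofReal (Real.rpow_le_rpow hc.le (h2.trans h3) hq0.le)
  have hmeasS : Measurable fun ω => ENNReal.ofReal ((∑ j ∈ Finset.range d, |X j ω| ^ p) ^ q) :=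
    ((Real.continuous_rpow_const hq0.le).measurable.comp
      (Finset.measurable_sum _ fun j _ => hYm j)).ennreal_ofReal
  have hIlow : ENNReal.ofReal (c ^ q) * μ Bsᶜ
      ≤ ∫⁻ ω, ENNReal.ofReal ((∑ j ∈ Finset.range d, |X j ω| ^ p) ^ q) ∂μ := by
    calc ENNReal.ofReal (c ^ q) * μ Bsᶜ
        = ∫⁻ _ω in Bsᶜ, ENNReal.ofReal (c ^ q) ∂μ := (setLIntegral_const _ _).symm
      _ ≤ ∫⁻ ω in Bsᶜ, ENNReal.ofReal ((∑ j ∈ Finset.range d, |X j ω| ^ p) ^ q) ∂μ :=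
          setLIntegral_mono hmeasS hpoint
      _ ≤ _ := setLIntegral_le_lintegral _ _
  -- put everything together
  set D : ℝ≥0∞ := ENNReal.ofReal ((d:ℝ) ^ q) with hDdef
  have hD0 : D ≠ 0 := (ENNReal.ofReal_pos.2 (Real.rpow_pos_of_pos hdpos q)).ne'
  have hDt : D ≠ ⊤ := ENNReal.ofReal_ne_top
  rw [ENNReal.lt_div_iff_mul_lt (Or.inl hD0) (Or.inl hDt)]
  have hcq : ENNReal.ofReal (c ^ q) = D * ENNReal.ofReal ((m/2) ^ q) := by
    have hc2 : c = (d:ℝ) * (m/2) := by rw [hcdef]; ring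
    rw [hc2, Real.mul_rpow hdpos.le (by positivity),
      ENNReal.ofReal_mul (Real.rpow_nonneg hdpos.le _), hDdef]
  have hm2 : 2*((n:ℝ)+1) ≤ (m/2) ^ q := by
    have h1 : (2*((n:ℝ)+1)) ^ (1/q) ≤ m/2 := by rw [hBdef] at hmB; linarith
    have h2 := Real.rpow_le_rpow (Real.rpow_nonneg ha0 _) h1 hq0.le
    rwa [← Real.rpow_mul ha0, one_div, inv_mul_cancel₀ hq0.ne', Real.rpow_one] at h2
  have hkey : ((n:ℝ≥0∞) + 1) ≤ ENNReal.ofReal ((m/2) ^ q) * 2⁻¹ := by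
    have hle : ENNReal.ofReal (2*((n:ℝ)+1)) ≤ ENNReal.ofReal ((m/2) ^ q) :=
      ENNReal.ofReal_le_ofReal hm2
    have heq : ENNReal.ofReal (2*((n:ℝ)+1)) * 2⁻¹ = (n:ℝ≥0∞) + 1 := by
      rw [ENNReal.ofReal_mul (by norm_num : (0:ℝ) ≤ 2), ENNReal.ofReal_ofNat,
        ENNReal.ofReal_add (Nat.cast_nonneg n) zero_le_one, ENNReal.ofReal_natCast,
        ENNReal.ofReal_one, mul_comm (2:ℝ≥0∞), mul_assoc,
        ENNReal.mul_inv_cancel (by norm_num) (by norm_num), mul_one]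
    rw [← heq]
    exact mul_le_mul_left hle _
  calc (n:ℝ≥0∞) * D < ((n:ℝ≥0∞) + 1) * D :=
        (ENNReal.mul_lt_mul_left hD0 hDt)
          (ENNReal.lt_add_right (ENNReal.natCast_ne_top n) one_ne_zero)
    _ ≤ (ENNReal.ofReal ((m/2) ^ q) * 2⁻¹) * D := mul_le_mul_left hkey _
    _ = ENNReal.ofReal (c ^ q) * 2⁻¹ := by rw [hcq]; ring
    _ ≤ ENNReal.ofReal (c ^ q) * μ Bsᶜ := mul_le_mul_right hμBc _
    _ ≤ _ := hIlow
end

section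
/- Fix p > 0 and r > 0 with r/p ≥ 1. Let X = (X_1, …, X_d) be a random vector with i.i.d. components distributed as a real random variable X with E|X|^r < ∞, and set μ_p = E|X|^p. Then E‖X‖_p^r / d^{r/p} → μ_p^{r/p} as d → ∞. -/
open MeasureTheory ProbabilityTheory Filter
open scoped ENNReal NNReal

/-- Fix `p > 0`, `r > 0` with `r/p ≥ 1`.  `X = (X_1, …, X_d)` has i.i.d.
components distributed as `X` with `E|X|^r < ∞`, `μ_p = E|X|^p`.  Then
`E‖X‖_p^r / d^{r/p} → μ_p^{r/p}` as `d → ∞`, where `‖x‖_p = (∑_{j<d} |x_j|^p)^{1/p}`. -/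
theorem stmt_5 {Ω : Type*} [MeasurableSpace Ω] (μ : Measure Ω) [IsProbabilityMeasure μ]
    (X : ℕ → Ω → ℝ)
    (hXmeas : ∀ j, Measurable (X j))
    (hindep : iIndepFun X μ)
    (hident : ∀ j, IdentDistrib (X j) (X 0) μ μ)
    (p r : ℝ) (hp : 0 < p) (hr : 0 < r) (hrp : 1 ≤ r / p)
    (hmom : Integrable (fun ω => |X 0 ω| ^ r) μ)
    (μp : ℝ) (hμp : μp = ∫ ω, |X 0 ω| ^ p ∂μ) :
    Tendsto
      (fun d : ℕ =>
        (∫ ω, ((∑ j ∈ Finset.range d, |X j ω| ^ p) ^ (1 / p)) ^ r ∂μ) / (d : ℝ) ^ (r / p))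
      atTop (nhds (μp ^ (r / p))) := by
  set q : ℝ := r / p with hqdef
  have hq0 : 0 < q := lt_of_lt_of_le zero_lt_one hrp
  set g : ℝ → ℝ := fun x => |x| ^ p with hg
  have hgmeas : Measurable g := (continuous_abs.rpow_const fun _ => Or.inr hp.le).measurable
  set Y : ℕ → Ω → ℝ := fun j ω => |X j ω| ^ p with hY
  have hYmeas : ∀ j, Measurable (Y j) := fun j => hgmeas.comp (hXmeas j)
  have hYnn : ∀ j ω, 0 ≤ Y j ω := fun j ω => Real.rpow_nonneg (abs_nonneg _) _
  have hYindep : iIndepFun Y μ :=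
    hindep.comp (fun _ => g) (fun _ => hgmeas)
  have hYident : ∀ j, IdentDistrib (Y j) (Y 0) μ μ := fun j => (hident j).comp hgmeas
  -- exponents
  set q' : ℝ≥0∞ := ENNReal.ofReal q with hq'
  have hq'0 : q' ≠ 0 := by simp [hq', ENNReal.ofReal_eq_zero, not_le, hq0]
  have hq'top : q' ≠ ∞ := ENNReal.ofReal_ne_top
  have hq'1 : 1 ≤ q' := by
    rw [hq', ← ENNReal.ofReal_one]; exact ENNReal.ofReal_le_ofReal hrp
  have hq'toReal : q'.toReal = q := ENNReal.toReal_ofReal hq0.le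
  -- key pointwise identity
  have hkey : ∀ ω, ‖Y 0 ω‖ ^ q = |X 0 ω| ^ r := by
    intro ω
    rw [Real.norm_eq_abs, abs_of_nonneg (hYnn 0 ω), hY, ← Real.rpow_mul (abs_nonneg _)]
    rw [hqdef]
    field_simp
  have hY0int : Integrable (fun ω => ‖Y 0 ω‖ ^ q'.toReal) μ := by
    have : (fun ω => ‖Y 0 ω‖ ^ q'.toReal) = fun ω => |X 0 ω| ^ r := by
      funext ω; rw [hq'toReal, hkey]
    rw [this]; exact hmom
  have hY0mem : MemLp (Y 0) q' μ := by
    have h1 : MemLp (fun ω => ‖Y 0 ω‖ ^ q'.toReal) 1 μ := memLp_one_iff_integrable.2 hY0int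
    have h2 := (memLp_norm_rpow_iff (μ := μ) (p := q') (hYmeas 0).aestronglyMeasurable hq'0 hq'top)
    rw [ENNReal.div_self hq'0 hq'top] at h2
    exact h2.1 h1
  have hYmem : ∀ i, MemLp (Y i) q' μ := fun i => (hYident i).memLp_iff.2 hY0mem
  -- LLN in L^q
  have hslln := strong_law_Lp hq'1 hq'top Y hY0mem
    (fun i j hij => hYindep.indepFun hij) hYident
  have hEY : μ[Y 0] = μp := by rw [hμp]
  rw [hEY] at hslln
  set F : ℕ → Ω → ℝ := fun n ω => (n : ℝ)⁻¹ • ∑ i ∈ Finset.range n, Y i ω with hF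
  have hFnn : ∀ n ω, 0 ≤ F n ω := fun n ω => by
    have : (0:ℝ) ≤ ∑ i ∈ Finset.range n, Y i ω :=
      Finset.sum_nonneg fun i _ => hYnn i ω
    simpa [hF, smul_eq_mul] using mul_nonneg (inv_nonneg.2 (Nat.cast_nonneg n)) this
  have hFmem : ∀ n, MemLp (F n) q' μ := fun n => by
    have h1 : MemLp (∑ i ∈ Finset.range n, Y i) q' μ :=
      memLp_finset_sum' _ (fun i _ => hYmem i)
    have h2 := h1.const_smul ((n : ℝ)⁻¹)
    have h3 : ((n : ℝ)⁻¹ • ∑ i ∈ Finset.range n, Y i) = F n := by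
      funext ω; simp [hF]
    rwa [h3] at h2
  have hμpnn : 0 ≤ μp := hμp ▸ integral_nonneg fun ω => Real.rpow_nonneg (abs_nonneg _) _
  -- norms
  set N : ℕ → ℝ := fun n => (eLpNorm (F n) q' μ).toReal with hN
  set D : ℕ → ℝ := fun n => (eLpNorm (fun ω => F n ω - μp) q' μ).toReal with hD
  have hDmem : ∀ n, MemLp (fun ω => F n ω - μp) q' μ := fun n => by
    have := (hFmem n).sub (memLp_const (μ := μ) (p := q') μp)
    simpa [Pi.sub_def] using this
  have hconst : eLpNorm (fun _ : Ω => μp) q' μ = ENNReal.ofReal μp := by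
    rw [eLpNorm_const _ hq'0 (IsProbabilityMeasure.ne_zero μ)]
    simp [Real.enorm_of_nonneg hμpnn, Real.nnnorm_of_nonneg hμpnn, ENNReal.ofReal, Real.toNNReal_of_nonneg hμpnn]
  have hDto : Tendsto D atTop (nhds 0) := by
    have := (ENNReal.tendsto_toReal (ENNReal.zero_ne_top)).comp hslln
    simpa [hD, hF, Function.comp_def] using this
  -- |N n - μp| ≤ D n
  have habs : ∀ n, |N n - μp| ≤ D n := by
    intro n
    have hfin1 : eLpNorm (F n) q' μ ≠ ∞ := (hFmem n).2.ne
    have hfin2 : eLpNorm (fun ω => F n ω - μp) q' μ ≠ ∞ := (hDmem n).2.ne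
    have htri1 : eLpNorm (F n) q' μ ≤
        eLpNorm (fun ω => F n ω - μp) q' μ + ENNReal.ofReal μp := by
      rw [← hconst]
      have h := eLpNorm_add_le (f := fun ω => F n ω - μp) (g := fun _ : Ω => μp)
        (hDmem n).1 aestronglyMeasurable_const hq'1
      have he : ((fun ω => F n ω - μp) + fun _ : Ω => μp) = F n := by
        funext ω; simp
      rwa [he] at h
    have htri2 : ENNReal.ofReal μp ≤
        eLpNorm (fun ω => F n ω - μp) q' μ + eLpNorm (F n) q' μ := by
      rw [← hconst]
      have h2 := eLpNorm_add_le (f := fun ω => μp - F n ω) (g := F n)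
        (aestronglyMeasurable_const.sub (hFmem n).1) (hFmem n).1 hq'1
      have hre : ((fun ω => μp - F n ω) + F n) = (fun _ : Ω => μp) := by
        funext ω; simp
      have hneg : eLpNorm (fun ω => μp - F n ω) q' μ
          = eLpNorm (fun ω => F n ω - μp) q' μ := by
        rw [← eLpNorm_neg]; congr 1; funext ω; simp
      calc eLpNorm (fun _ : Ω => μp) q' μ
          = eLpNorm ((fun ω => μp - F n ω) + F n) q' μ := by rw [hre]
        _ ≤ eLpNorm (fun ω => μp - F n ω) q' μ + eLpNorm (F n) q' μ := h2
        _ = _ := by rw [hneg]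
    have h1 : N n ≤ D n + μp := by
      have := ENNReal.toReal_mono (by
        exact ENNReal.add_ne_top.2 ⟨hfin2, ENNReal.ofReal_ne_top⟩) htri1
      rwa [ENNReal.toReal_add hfin2 ENNReal.ofReal_ne_top,
        ENNReal.toReal_ofReal hμpnn] at this
    have h2 : μp ≤ D n + N n := by
      have := ENNReal.toReal_mono (ENNReal.add_ne_top.2 ⟨hfin2, hfin1⟩) htri2
      rwa [ENNReal.toReal_add hfin2 hfin1, ENNReal.toReal_ofReal hμpnn] at this
    rw [abs_sub_le_iff]
    constructor <;> linarith
  have hNto : Tendsto N atTop (nhds μp) := by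
    rw [← tendsto_sub_nhds_zero_iff]
    have h0 : Tendsto (fun n => |N n - μp|) atTop (nhds 0) :=
      squeeze_zero (fun n => abs_nonneg _) habs hDto
    exact tendsto_zero_iff_abs_tendsto_zero _ |>.2 h0
  have hNq : Tendsto (fun n => N n ^ q) atTop (nhds (μp ^ q)) :=
    hNto.rpow_const (Or.inr hq0.le)
  -- identify the sequences
  have heq : (fun d : ℕ =>
      (∫ ω, ((∑ j ∈ Finset.range d, |X j ω| ^ p) ^ (1 / p)) ^ r ∂μ) / (d : ℝ) ^ q)
      = fun n => N n ^ q := by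
    funext n
    have hint : ∫ ω, ‖F n ω‖ ^ q ∂μ
        = (∫ ω, ((∑ j ∈ Finset.range n, |X j ω| ^ p) ^ (1 / p)) ^ r ∂μ) / (n : ℝ) ^ q := by
      rw [← integral_div]
      congr 1; funext ω
      have hS : (0:ℝ) ≤ ∑ j ∈ Finset.range n, |X j ω| ^ p :=
        Finset.sum_nonneg fun i _ => Real.rpow_nonneg (abs_nonneg _) _
      rw [Real.norm_eq_abs, abs_of_nonneg (hFnn n ω)]
      have h1 : ((∑ j ∈ Finset.range n, |X j ω| ^ p) ^ (1/p)) ^ r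
          = (∑ j ∈ Finset.range n, |X j ω| ^ p) ^ q := by
        rw [← Real.rpow_mul hS]
        congr 1
        rw [hqdef]; field_simp
      rw [h1, ← Real.div_rpow hS (Nat.cast_nonneg n)]
      congr 1
      simp [hF, hY, smul_eq_mul, div_eq_inv_mul]
    have hNval : N n ^ q = ∫ ω, ‖F n ω‖ ^ q ∂μ := by
      have := (hFmem n).eLpNorm_eq_integral_rpow_norm hq'0 hq'top
      have hInn : (0:ℝ) ≤ ∫ ω, ‖F n ω‖ ^ q'.toReal ∂μ :=
        integral_nonneg fun ω => Real.rpow_nonneg (norm_nonneg _) _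
      show (eLpNorm (F n) q' μ).toReal ^ q = _
      rw [this, ENNReal.toReal_ofReal (Real.rpow_nonneg hInn _),
        ← Real.rpow_mul hInn, hq'toReal, inv_mul_cancel₀ hq0.ne', Real.rpow_one]
    rw [hint] at hNval
    exact hNval.symm
  rw [heq]
  exact hNq
end

section
/- Fix p > 0 and assume 0 < E|X|^m < ∞ for m = max(2, p). Then, as d → ∞, E‖X‖_p / d^{1/p} → μ_p^{1/p} and E‖X‖_p² / d^{2/p} → μ_p^{2/p}, and consequently √(Var ‖X‖_p) / E‖X‖_p → 0. -/
open MeasureTheory ProbabilityTheory Filter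


-- pointwise inequality for 0 < r ≤ 1
lemma aux_abs_rpow_sub_le {a c r : ℝ} (ha : 0 ≤ a) (hc : 0 ≤ c) (hr0 : 0 ≤ r) (hr1 : r ≤ 1) :
    |a ^ r - c ^ r| ≤ |a - c| ^ r := by
  wlog h : c ≤ a generalizing a c
  · rw [abs_sub_comm, abs_sub_comm a c]; exact this hc ha (le_of_not_ge h)
  have hac : 0 ≤ a - c := sub_nonneg.2 h
  have key : a ^ r ≤ (a - c) ^ r + c ^ r := by
    have := NNReal.rpow_add_le_add_rpow (Real.toNNReal (a - c)) (Real.toNNReal c) hr0 hr1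
    have h2 : ((Real.toNNReal (a - c) + Real.toNNReal c : NNReal) : ℝ) = a := by
      simp [Real.toNNReal_of_nonneg hac, Real.toNNReal_of_nonneg hc]
    calc a ^ r = (((Real.toNNReal (a - c) + Real.toNNReal c : NNReal) : ℝ)) ^ r := by rw [h2]
      _ = (((Real.toNNReal (a - c) + Real.toNNReal c : NNReal)) ^ r : NNReal) := by
          rw [NNReal.coe_rpow]
      _ ≤ ((Real.toNNReal (a - c) ^ r + Real.toNNReal c ^ r : NNReal) : ℝ) := by
          exact_mod_cast this
      _ = (a - c) ^ r + c ^ r := by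
          simp [NNReal.coe_rpow, Real.coe_toNNReal _ hac, Real.coe_toNNReal _ hc]
  have h1 : c ^ r ≤ a ^ r := Real.rpow_le_rpow hc h hr0
  rw [abs_of_nonneg (sub_nonneg.2 h1), abs_of_nonneg hac]
  linarith

-- E g^r ≤ (E g)^r for nonneg g, 0 < r ≤ 1, probability measure
lemma aux_jensen {Ω : Type*} [MeasurableSpace Ω] {μ : Measure Ω} [IsProbabilityMeasure μ]
    {g : Ω → ℝ} {r : ℝ} (hg : ∀ ω, 0 ≤ g ω) (hr0 : 0 < r) (hr1 : r ≤ 1)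
    (hint : Integrable g μ) :
    ∫ ω, g ω ^ r ∂μ ≤ (∫ ω, g ω ∂μ) ^ r := by
  have hmem1 : MemLp g 1 μ := (memLp_one_iff_integrable).2 hint
  have hr' : ENNReal.ofReal r ≤ 1 := by
    rw [← ENNReal.ofReal_one]; exact ENNReal.ofReal_le_ofReal hr1
  have hr'0 : ENNReal.ofReal r ≠ 0 := (ENNReal.ofReal_pos.2 hr0).ne'
  have hmemr : MemLp g (ENNReal.ofReal r) μ := hmem1.mono_exponent hr'
  have hle := eLpNorm_le_eLpNorm_of_exponent_le hr' hmem1.aestronglyMeasurable (μ := μ)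
  rw [hmemr.eLpNorm_eq_integral_rpow_norm hr'0 ENNReal.ofReal_ne_top,
    hmem1.eLpNorm_eq_integral_rpow_norm one_ne_zero ENNReal.one_ne_top] at hle
  simp only [ENNReal.toReal_ofReal hr0.le, ENNReal.toReal_one, Real.rpow_one, inv_one] at hle
  have hnorm : ∀ ω, ‖g ω‖ = g ω := fun ω => by
    rw [Real.norm_eq_abs, abs_of_nonneg (hg ω)]
  simp only [hnorm] at hle
  rw [ENNReal.ofReal_le_ofReal_iff (integral_nonneg fun ω => (hnorm ω) ▸ norm_nonneg _)] at hle
  have h2 : ((∫ ω, g ω ^ r ∂μ) ^ r⁻¹) ^ r ≤ (∫ ω, g ω ∂μ) ^ r :=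
    Real.rpow_le_rpow (Real.rpow_nonneg (integral_nonneg fun ω => Real.rpow_nonneg (hg ω) r) _)
      hle hr0.le
  rwa [Real.rpow_inv_rpow (integral_nonneg fun ω => Real.rpow_nonneg (hg ω) r) hr0.ne'] at h2


lemma aux_L1 {Ω : Type*} [MeasurableSpace Ω] {μ : Measure Ω} [IsProbabilityMeasure μ]
    {T : ℕ → Ω → ℝ} {c r : ℝ}
    (hTpos : ∀ d ω, 0 ≤ T d ω) (hc : 0 ≤ c) (hr : 1 ≤ r)
    (hmem : ∀ d, MemLp (T d) (ENNReal.ofReal r) μ)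
    (hconv : Tendsto (fun d => eLpNorm (fun ω => T d ω - c) (ENNReal.ofReal r) μ) atTop
      (nhds 0)) :
    Tendsto (fun d => ∫ ω, T d ω ^ r ∂μ) atTop (nhds (c ^ r)) := by
  have hr0 : 0 < r := lt_of_lt_of_le one_pos hr
  set r' : ENNReal := ENNReal.ofReal r with hr'
  have hr'1 : 1 ≤ r' := by
    rw [hr', ← ENNReal.ofReal_one]; exact ENNReal.ofReal_le_ofReal hr
  have hr'0 : r' ≠ 0 := (ENNReal.ofReal_pos.2 hr0).ne'
  have hr't : r' ≠ ⊤ := ENNReal.ofReal_ne_top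
  have hmemc : MemLp (fun _ : Ω => c) r' μ := memLp_const c
  have hmemsub : ∀ d, MemLp (fun ω => T d ω - c) r' μ := fun d => (hmem d).sub hmemc
  have hconst : eLpNorm (fun _ : Ω => c) r' μ = (‖c‖₊ : ENNReal) := by
    rw [eLpNorm_const c hr'0 (IsProbabilityMeasure.ne_zero μ)]
    simp
    rfl
  have hup : ∀ d, eLpNorm (T d) r' μ ≤
      eLpNorm (fun ω => T d ω - c) r' μ + (‖c‖₊ : ENNReal) := by
    intro d
    have : T d = fun ω => (T d ω - c) + c := by funext ω; ring
    calc eLpNorm (T d) r' μ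
        = eLpNorm (fun ω => (T d ω - c) + c) r' μ := by rw [← this]
      _ ≤ eLpNorm (fun ω => T d ω - c) r' μ + eLpNorm (fun _ : Ω => c) r' μ :=
          eLpNorm_add_le (hmemsub d).aestronglyMeasurable aestronglyMeasurable_const hr'1
      _ = eLpNorm (fun ω => T d ω - c) r' μ + (‖c‖₊ : ENNReal) := by rw [hconst]
  have hlow : ∀ d, (‖c‖₊ : ENNReal) - eLpNorm (fun ω => T d ω - c) r' μ ≤
      eLpNorm (T d) r' μ := by
    intro d
    rw [tsub_le_iff_left]
    have h1 : eLpNorm (fun ω => c - T d ω) r' μ = eLpNorm (fun ω => T d ω - c) r' μ := by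
      have : (fun ω => c - T d ω) = -(fun ω => T d ω - c) := by funext ω; simp
      rw [this, eLpNorm_neg]
    calc (‖c‖₊ : ENNReal) = eLpNorm (fun _ : Ω => c) r' μ := hconst.symm
      _ = eLpNorm (fun ω => (c - T d ω) + T d ω) r' μ := by
          congr 1; funext ω; ring
      _ ≤ eLpNorm (fun ω => c - T d ω) r' μ + eLpNorm (T d) r' μ := by
          refine eLpNorm_add_le ?_ (hmem d).aestronglyMeasurable hr'1
          rw [show (fun ω => c - T d ω) = -(fun ω => T d ω - c) by funext ω; simp]
          exact ((hmemsub d).aestronglyMeasurable).neg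
      _ = eLpNorm (fun ω => T d ω - c) r' μ + eLpNorm (T d) r' μ := by rw [h1]
  have htendA : Tendsto (fun d => eLpNorm (T d) r' μ) atTop (nhds (‖c‖₊ : ENNReal)) := by
    have hl : Tendsto (fun d => (‖c‖₊ : ENNReal) - eLpNorm (fun ω => T d ω - c) r' μ) atTop
        (nhds ((‖c‖₊ : ENNReal) - 0)) :=
      ENNReal.Tendsto.sub tendsto_const_nhds hconv (Or.inl ENNReal.coe_ne_top)
    have hu : Tendsto (fun d => eLpNorm (fun ω => T d ω - c) r' μ + (‖c‖₊ : ENNReal)) atTop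
        (nhds (0 + (‖c‖₊ : ENNReal))) :=
      Tendsto.add hconv tendsto_const_nhds
    rw [tsub_zero] at hl
    rw [zero_add] at hu
    exact tendsto_of_tendsto_of_tendsto_of_le_of_le hl hu hlow hup
  have htoReal : Tendsto (fun d => (eLpNorm (T d) r' μ).toReal) atTop (nhds c) := by
    have := (ENNReal.tendsto_toReal ENNReal.coe_ne_top).comp htendA
    simpa [Function.comp_def, Real.norm_eq_abs, abs_of_nonneg hc] using this
  have heq : ∀ d, (eLpNorm (T d) r' μ).toReal = (∫ ω, T d ω ^ r ∂μ) ^ r⁻¹ := by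
    intro d
    rw [(hmem d).eLpNorm_eq_integral_rpow_norm hr'0 hr't]
    rw [ENNReal.toReal_ofReal]
    · congr 1
      · apply integral_congr_ae
        filter_upwards with ω
        rw [Real.norm_eq_abs, abs_of_nonneg (hTpos d ω), ENNReal.toReal_ofReal hr0.le]
      · rw [ENNReal.toReal_ofReal hr0.le]
    · apply Real.rpow_nonneg
      apply integral_nonneg
      intro ω; positivity
  have hfinal : (fun d => ∫ ω, T d ω ^ r ∂μ) =
      fun d => ((eLpNorm (T d) r' μ).toReal) ^ r := by
    funext d
    rw [heq d, Real.rpow_inv_rpow (integral_nonneg fun ω => Real.rpow_nonneg (hTpos d ω) r)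
      hr0.ne']
  rw [hfinal]
  exact htoReal.rpow_const (Or.inr hr0.le)

lemma aux_L2 {Ω : Type*} [MeasurableSpace Ω] {μ : Measure Ω} [IsProbabilityMeasure μ]
    {T : ℕ → Ω → ℝ} {c r : ℝ}
    (hTmeas : ∀ d, AEStronglyMeasurable (T d) μ)
    (hTpos : ∀ d ω, 0 ≤ T d ω) (hc : 0 ≤ c) (hr0 : 0 < r) (hr1 : r ≤ 1)
    (hintr : ∀ d, Integrable (fun ω => T d ω ^ r) μ)
    (hint1 : ∀ d, Integrable (T d) μ)
    (hconv : Tendsto (fun d => ∫ ω, |T d ω - c| ∂μ) atTop (nhds 0)) :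
    Tendsto (fun d => ∫ ω, T d ω ^ r ∂μ) atTop (nhds (c ^ r)) := by
  have hcont : Continuous fun x : ℝ => x ^ r := by
    rw [continuous_iff_continuousAt]
    exact fun x => Real.continuousAt_rpow_const x r (Or.inr hr0.le)
  have hintsub : ∀ d, Integrable (fun ω => |T d ω - c|) μ :=
    fun d => ((hint1 d).sub (integrable_const c)).abs
  have hintsubr : ∀ d, Integrable (fun ω => |T d ω - c| ^ r) μ := by
    intro d
    refine Integrable.mono' ((hintsub d).add (integrable_const 1)) ?_ ?_
    · exact (hcont.comp_aestronglyMeasurable ((hTmeas d).sub aestronglyMeasurable_const).norm)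
    · filter_upwards with ω
      rw [Real.norm_eq_abs, abs_of_nonneg (Real.rpow_nonneg (abs_nonneg _) r)]
      rcases le_total (|T d ω - c|) 1 with h | h
      · calc |T d ω - c| ^ r ≤ 1 ^ r := Real.rpow_le_rpow (abs_nonneg _) h hr0.le
          _ = 1 := Real.one_rpow r
          _ ≤ |T d ω - c| + 1 := by linarith [abs_nonneg (T d ω - c)]
      · calc |T d ω - c| ^ r ≤ |T d ω - c| ^ (1:ℝ) :=
            Real.rpow_le_rpow_of_exponent_le h hr1
          _ = |T d ω - c| := Real.rpow_one _
          _ ≤ |T d ω - c| + 1 := by linarith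
  have hbound : ∀ d, |(∫ ω, T d ω ^ r ∂μ) - c ^ r| ≤ (∫ ω, |T d ω - c| ∂μ) ^ r := by
    intro d
    have h1 : (∫ ω, T d ω ^ r ∂μ) - c ^ r = ∫ ω, (T d ω ^ r - c ^ r) ∂μ := by
      rw [integral_sub (hintr d) (integrable_const _), integral_const]
      simp
    rw [h1]
    have s1 : |∫ ω, (T d ω ^ r - c ^ r) ∂μ| ≤ ∫ ω, |T d ω ^ r - c ^ r| ∂μ := by
      simpa [Real.norm_eq_abs] using
        norm_integral_le_integral_norm (μ := μ) (fun ω => T d ω ^ r - c ^ r)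
    have s2 : ∫ ω, |T d ω ^ r - c ^ r| ∂μ ≤ ∫ ω, |T d ω - c| ^ r ∂μ := by
      refine integral_mono ((hintr d).sub (integrable_const _)).abs (hintsubr d) ?_
      intro ω
      exact aux_abs_rpow_sub_le (hTpos d ω) hc hr0.le hr1
    have s3 : ∫ ω, |T d ω - c| ^ r ∂μ ≤ (∫ ω, |T d ω - c| ∂μ) ^ r :=
      aux_jensen (fun ω => abs_nonneg _) hr0 hr1 (hintsub d)
    linarith
  rw [tendsto_iff_dist_tendsto_zero]
  simp only [Real.dist_eq]
  have hub : Tendsto (fun d => (∫ ω, |T d ω - c| ∂μ) ^ r) atTop (nhds 0) := by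
    have := hconv.rpow_const (p := r) (Or.inr hr0.le)
    rwa [Real.zero_rpow hr0.ne'] at this
  exact squeeze_zero (fun d => abs_nonneg _) hbound hub

/-- Fix `p > 0` and assume `0 < E|X|^m < ∞` for `m = max(2, p)`.  Then, as
`d → ∞`, `E‖X‖_p / d^{1/p} → μ_p^{1/p}`, `E‖X‖_p² / d^{2/p} → μ_p^{2/p}`, and
consequently `√(Var ‖X‖_p) / E‖X‖_p → 0`. -/
theorem stmt_7 {Ω : Type*} [MeasurableSpace Ω] (μ : Measure Ω) [IsProbabilityMeasure μ]
    (X : ℕ → Ω → ℝ)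
    (hXmeas : ∀ j, Measurable (X j))
    (hindep : iIndepFun X μ)
    (hident : ∀ j, IdentDistrib (X j) (X 0) μ μ)
    (p : ℝ) (hp : 0 < p)
    (hmom : Integrable (fun ω => |X 0 ω| ^ max 2 p) μ)
    (hpos : 0 < ∫ ω, |X 0 ω| ^ max 2 p ∂μ)
    (μp : ℝ) (hμp : μp = ∫ ω, |X 0 ω| ^ p ∂μ)
    (Np : ℕ → Ω → ℝ)
    (hNp : ∀ d ω, Np d ω = (∑ j ∈ Finset.range d, |X j ω| ^ p) ^ (1 / p)) :
    Tendsto (fun d : ℕ => (∫ ω, Np d ω ∂μ) / (d : ℝ) ^ (1 / p)) atTop (nhds (μp ^ (1 / p)))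
    ∧ Tendsto (fun d : ℕ => (∫ ω, (Np d ω) ^ 2 ∂μ) / (d : ℝ) ^ (2 / p)) atTop
        (nhds (μp ^ (2 / p)))
    ∧ Tendsto (fun d : ℕ => Real.sqrt (variance (Np d) μ) / ∫ ω, Np d ω ∂μ) atTop
        (nhds 0) := by
  set m : ℝ := max 2 p with hm
  have hm2 : (2:ℝ) ≤ m := le_max_left _ _
  have hpm : p ≤ m := le_max_right _ _
  have hm0 : (0:ℝ) < m := by linarith
  -- measurability of x ↦ |x|^p
  have hφcont : Continuous fun x : ℝ => |x| ^ p := by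
    have h1 : Continuous fun x : ℝ => x ^ p :=
      continuous_iff_continuousAt.2 fun x => Real.continuousAt_rpow_const x p (Or.inr hp.le)
    exact h1.comp continuous_abs
  have hφmeas : Measurable fun x : ℝ => |x| ^ p := hφcont.measurable
  set Y : ℕ → Ω → ℝ := fun j ω => |X j ω| ^ p with hYdef
  have hYmeas : ∀ j, Measurable (Y j) := fun j => hφmeas.comp (hXmeas j)
  have hYpos : ∀ j ω, 0 ≤ Y j ω := fun j ω => Real.rpow_nonneg (abs_nonneg _) p
  have hYindep : Pairwise (Function.onFun (IndepFun · · μ) Y) :=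
    fun i j hij => (hindep.indepFun hij).comp hφmeas hφmeas
  have hYident : ∀ j, IdentDistrib (Y j) (Y 0) μ μ := fun j => (hident j).comp hφmeas
  -- MemLp of X 0 at exponent m
  have hmne : ENNReal.ofReal m ≠ 0 := (ENNReal.ofReal_pos.2 hm0).ne'
  have hpne : ENNReal.ofReal p ≠ 0 := (ENNReal.ofReal_pos.2 hp).ne'
  have hmX : MemLp (X 0) (ENNReal.ofReal m) μ := by
    have h := memLp_norm_rpow_iff (μ := μ) (p := ENNReal.ofReal m) (q := ENNReal.ofReal m)
      (hXmeas 0).aestronglyMeasurable hmne ENNReal.ofReal_ne_top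
    rw [ENNReal.div_self hmne ENNReal.ofReal_ne_top, memLp_one_iff_integrable] at h
    apply h.1
    simpa [ENNReal.toReal_ofReal hm0.le, Real.norm_eq_abs] using hmom
  set q : ℝ := m / p with hqdef
  have hq1 : (1:ℝ) ≤ q := (one_le_div hp).2 hpm
  have hq0 : (0:ℝ) < q := by linarith
  have hqne : ENNReal.ofReal q ≠ 0 := (ENNReal.ofReal_pos.2 hq0).ne'
  have hq1' : (1:ENNReal) ≤ ENNReal.ofReal q := by
    rw [← ENNReal.ofReal_one]; exact ENNReal.ofReal_le_ofReal hq1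
  have hmY : MemLp (Y 0) (ENNReal.ofReal q) μ := by
    have h := (memLp_norm_rpow_iff (μ := μ) (p := ENNReal.ofReal m) (q := ENNReal.ofReal p)
      (hXmeas 0).aestronglyMeasurable hpne ENNReal.ofReal_ne_top).2 hmX
    have e1 : ENNReal.ofReal m / ENNReal.ofReal p = ENNReal.ofReal q := by
      rw [hqdef, ENNReal.ofReal_div_of_pos hp]
    rw [e1] at h
    have e2 : (fun x => ‖X 0 x‖ ^ (ENNReal.ofReal p).toReal) = Y 0 := by
      funext x
      rw [ENNReal.toReal_ofReal hp.le, Real.norm_eq_abs]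
    rwa [e2] at h
  -- basic facts about μp
  have hintY : Integrable (Y 0) μ := by
    have h1 : MemLp (X 0) (ENNReal.ofReal p) μ :=
      hmX.mono_exponent (ENNReal.ofReal_le_ofReal hpm)
    have h2 := h1.integrable_norm_rpow hpne ENNReal.ofReal_ne_top
    simpa [ENNReal.toReal_ofReal hp.le, Real.norm_eq_abs] using h2
  have hμp0 : 0 ≤ μp := by
    rw [hμp]; exact integral_nonneg fun ω => Real.rpow_nonneg (abs_nonneg _) p
  have hμppos : 0 < μp := by
    rcases lt_or_eq_of_le hμp0 with h | h
    · exact h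
    exfalso
    have hz : (fun ω => |X 0 ω| ^ p) =ᵐ[μ] 0 := by
      rw [← integral_eq_zero_iff_of_nonneg (fun ω => Real.rpow_nonneg (abs_nonneg _) p) hintY]
      rw [← hμp, ← h]
    have hz2 : (fun ω => |X 0 ω| ^ m) =ᵐ[μ] 0 := by
      filter_upwards [hz] with ω hω
      simp only [Pi.zero_apply] at hω ⊢
      have habs : |X 0 ω| = 0 := by
        by_contra hne
        have : (0:ℝ) < |X 0 ω| := lt_of_le_of_ne (abs_nonneg _) (Ne.symm hne)
        exact absurd hω (ne_of_gt (Real.rpow_pos_of_pos this p))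
      rw [habs, Real.zero_rpow hm0.ne']
    rw [integral_congr_ae hz2] at hpos
    simp at hpos
  -- the averages T d
  set T : ℕ → Ω → ℝ := fun d ω => (d : ℝ)⁻¹ * ∑ j ∈ Finset.range d, Y j ω with hTdef
  have hTpos : ∀ d ω, 0 ≤ T d ω := fun d ω =>
    mul_nonneg (inv_nonneg.2 (Nat.cast_nonneg d)) (Finset.sum_nonneg fun j _ => hYpos j ω)
  have hTmem : ∀ d, MemLp (T d) (ENNReal.ofReal q) μ := by
    intro d
    have h1 : ∀ j ∈ Finset.range d, MemLp (Y j) (ENNReal.ofReal q) μ :=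
      fun j _ => (hYident j).symm.memLp_snd hmY
    have h2 := memLp_finsetSum' (Finset.range d) h1
    refine MemLp.ae_eq (Eventually.of_forall fun ω => ?_) (h2.const_mul ((d:ℝ)⁻¹))
    simp [hTdef, Finset.sum_apply]
  have hTmeas : ∀ d, AEStronglyMeasurable (T d) μ := fun d => (hTmem d).aestronglyMeasurable
  -- strong law of large numbers in L^q
  have hLLN : Tendsto (fun d => eLpNorm (fun ω => T d ω - μp) (ENNReal.ofReal q) μ)
      atTop (nhds 0) := by
    have h := strong_law_Lp (μ := μ) hq1' ENNReal.ofReal_ne_top Y hmY hYindep hYident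
    have he : μ[Y 0] = μp := by rw [hμp]
    simpa [he, smul_eq_mul, hTdef] using h
  -- key convergence
  have key : ∀ r : ℝ, 0 < r → r ≤ q →
      Tendsto (fun d => ∫ ω, T d ω ^ r ∂μ) atTop (nhds (μp ^ r)) := by
    intro r hr0 hrq
    have hsq : ∀ s : ENNReal, s ≠ 0 → s ≤ ENNReal.ofReal q →
        Tendsto (fun d => eLpNorm (fun ω => T d ω - μp) s μ) atTop (nhds 0) := by
      intro s hs0 hsle
      refine tendsto_of_tendsto_of_tendsto_of_le_of_le tendsto_const_nhds hLLN
        (fun d => zero_le) (fun d => ?_)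
      exact eLpNorm_le_eLpNorm_of_exponent_le hsle
        ((hTmeas d).sub aestronglyMeasurable_const)
    rcases le_or_gt 1 r with h1 | h1
    · exact aux_L1 hTpos hμp0 h1
        (fun d => (hTmem d).mono_exponent (ENNReal.ofReal_le_ofReal hrq))
        (hsq (ENNReal.ofReal r) (ENNReal.ofReal_pos.2 hr0).ne' (ENNReal.ofReal_le_ofReal hrq))
    · have hint1 : ∀ d, Integrable (T d) μ := fun d =>
        memLp_one_iff_integrable.1 ((hTmem d).mono_exponent hq1')
      have hintr : ∀ d, Integrable (fun ω => T d ω ^ r) μ := by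
        intro d
        have h2 : MemLp (T d) (ENNReal.ofReal r) μ :=
          (hTmem d).mono_exponent (ENNReal.ofReal_le_ofReal hrq)
        have h3 := h2.integrable_norm_rpow (ENNReal.ofReal_pos.2 hr0).ne' ENNReal.ofReal_ne_top
        refine h3.congr ?_
        filter_upwards with ω
        rw [ENNReal.toReal_ofReal hr0.le, Real.norm_eq_abs, abs_of_nonneg (hTpos d ω)]
      have hconv1 : Tendsto (fun d => ∫ ω, |T d ω - μp| ∂μ) atTop (nhds 0) := by
        have h2 := hsq 1 one_ne_zero hq1'
        have h3 := (ENNReal.tendsto_toReal ENNReal.zero_ne_top).comp h2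
        simp only [ENNReal.toReal_zero] at h3
        refine h3.congr fun d => ?_
        have hmem1 : MemLp (fun ω => T d ω - μp) 1 μ :=
          memLp_one_iff_integrable.2 ((hint1 d).sub (integrable_const _))
        simp only [Function.comp_apply]
        rw [hmem1.eLpNorm_eq_integral_rpow_norm one_ne_zero ENNReal.one_ne_top]
        simp only [ENNReal.toReal_one, Real.rpow_one, inv_one]
        rw [ENNReal.toReal_ofReal (integral_nonneg fun ω => norm_nonneg _)]
        exact integral_congr_ae (Eventually.of_forall fun ω => Real.norm_eq_abs _)
      exact aux_L2 hTmeas hTpos hμp0 hr0 h1.le hintr hint1 hconv1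
  -- exponents
  have hrp1 : (0:ℝ) < 1 / p := by positivity
  have hrq1 : 1 / p ≤ q := by
    rw [hqdef]
    exact (div_le_div_iff_of_pos_right hp).2 (by linarith)
  have hrq2 : 2 / p ≤ q := by
    rw [hqdef]
    exact (div_le_div_iff_of_pos_right hp).2 hm2
  have k1 := key (1 / p) hrp1 hrq1
  have k2 := key (2 / p) (by positivity) hrq2
  have hsqx : ∀ x : ℝ, 0 ≤ x → (x ^ (1 / p)) ^ 2 = x ^ (2 / p) := by
    intro x hx
    rw [← Real.rpow_natCast (x ^ (1 / p)) 2, ← Real.rpow_mul hx]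
    congr 1
    push_cast
    ring
  have hNpT : ∀ d : ℕ, 1 ≤ d → ∀ ω, Np d ω = (d:ℝ) ^ (1 / p) * T d ω ^ (1 / p) := by
    intro d hd ω
    have hd0 : (0:ℝ) < d := by exact_mod_cast hd
    have hsum : (∑ j ∈ Finset.range d, |X j ω| ^ p) = (d:ℝ) * T d ω := by
      rw [hTdef]
      field_simp
      rfl
    rw [hNp, hsum, Real.mul_rpow hd0.le (hTpos d ω)]
  -- Goal 1
  have hg1 : (fun d : ℕ => ∫ ω, T d ω ^ (1/p) ∂μ) =ᶠ[atTop]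
      (fun d : ℕ => (∫ ω, Np d ω ∂μ) / (d:ℝ) ^ (1/p)) := by
    filter_upwards [eventually_ge_atTop 1] with d hd
    have hd0 : (0:ℝ) < d := by exact_mod_cast hd
    have hdp : (0:ℝ) < (d:ℝ) ^ (1/p) := Real.rpow_pos_of_pos hd0 _
    have h6 : (∫ ω, Np d ω ∂μ) = (d:ℝ) ^ (1/p) * ∫ ω, T d ω ^ (1/p) ∂μ := by
      rw [← integral_const_mul]
      exact integral_congr_ae (Eventually.of_forall fun ω => hNpT d hd ω)
    rw [h6, mul_div_cancel_left₀ _ hdp.ne']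
  have G1 : Tendsto (fun d : ℕ => (∫ ω, Np d ω ∂μ) / (d : ℝ) ^ (1 / p)) atTop
      (nhds (μp ^ (1 / p))) := k1.congr' hg1
  -- Goal 2
  have hNpT2 : ∀ d : ℕ, 1 ≤ d → ∀ ω, (Np d ω) ^ 2 = (d:ℝ) ^ (2 / p) * T d ω ^ (2 / p) := by
    intro d hd ω
    have hd0 : (0:ℝ) < d := by exact_mod_cast hd
    rw [hNpT d hd ω, mul_pow, hsqx _ hd0.le, hsqx _ (hTpos d ω)]
  have hg2 : (fun d : ℕ => ∫ ω, T d ω ^ (2/p) ∂μ) =ᶠ[atTop]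
      (fun d : ℕ => (∫ ω, (Np d ω) ^ 2 ∂μ) / (d:ℝ) ^ (2/p)) := by
    filter_upwards [eventually_ge_atTop 1] with d hd
    have hd0 : (0:ℝ) < d := by exact_mod_cast hd
    have hdp : (0:ℝ) < (d:ℝ) ^ (2/p) := Real.rpow_pos_of_pos hd0 _
    have h6 : (∫ ω, (Np d ω) ^ 2 ∂μ) = (d:ℝ) ^ (2/p) * ∫ ω, T d ω ^ (2/p) ∂μ := by
      rw [← integral_const_mul]
      exact integral_congr_ae (Eventually.of_forall fun ω => hNpT2 d hd ω)
    rw [h6, mul_div_cancel_left₀ _ hdp.ne']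
  have G2 : Tendsto (fun d : ℕ => (∫ ω, (Np d ω) ^ 2 ∂μ) / (d : ℝ) ^ (2 / p)) atTop
      (nhds (μp ^ (2 / p))) := k2.congr' hg2
  -- Goal 3
  have hNpmem : ∀ d : ℕ, 1 ≤ d → MemLp (Np d) 2 μ := by
    intro d hd
    have h1 := (memLp_norm_rpow_iff (μ := μ) (p := ENNReal.ofReal q) (q := ENNReal.ofReal (1/p))
      (hTmeas d) ((ENNReal.ofReal_pos.2 hrp1).ne') ENNReal.ofReal_ne_top).2 (hTmem d)
    have e1 : ENNReal.ofReal q / ENNReal.ofReal (1/p) = ENNReal.ofReal m := by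
      rw [← ENNReal.ofReal_div_of_pos hrp1]
      congr 1
      rw [hqdef]
      field_simp
    rw [e1] at h1
    have h2 : MemLp (fun x => ‖T d x‖ ^ (ENNReal.ofReal (1/p)).toReal) 2 μ := by
      refine h1.mono_exponent ?_
      rw [show (2:ENNReal) = ENNReal.ofReal 2 by norm_num]
      exact ENNReal.ofReal_le_ofReal hm2
    refine MemLp.ae_eq (Eventually.of_forall fun ω => ?_) (h2.const_mul ((d:ℝ) ^ (1/p)))
    rw [ENNReal.toReal_ofReal hrp1.le, Real.norm_eq_abs, abs_of_nonneg (hTpos d ω),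
      ← hNpT d hd ω]
  have hnum : Tendsto (fun d : ℕ => Real.sqrt ((∫ ω, (Np d ω)^2 ∂μ) / (d:ℝ)^(2/p) -
      ((∫ ω, Np d ω ∂μ) / (d:ℝ)^(1/p))^2)) atTop (nhds 0) := by
    have h := G2.sub (G1.pow 2)
    have hz : μp ^ (2/p) - (μp ^ (1/p))^2 = 0 := by
      rw [hsqx μp hμp0]
      ring
    rw [hz] at h
    have h2 := (Real.continuous_sqrt.tendsto (0:ℝ)).comp h
    simpa [Real.sqrt_zero, Function.comp_def] using h2
  have hquot := hnum.div G1 (ne_of_gt (Real.rpow_pos_of_pos hμppos _))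
  rw [zero_div] at hquot
  refine ⟨G1, G2, hquot.congr' ?_⟩
  filter_upwards [eventually_ge_atTop 1] with d hd
  have hd0 : (0:ℝ) < d := by exact_mod_cast hd
  have ht : (0:ℝ) < (d:ℝ)^(1/p) := Real.rpow_pos_of_pos hd0 _
  have hvar : variance (Np d) μ = (∫ ω, (Np d ω)^2 ∂μ) - (∫ ω, Np d ω ∂μ)^2 := by
    rw [variance_eq_sub (hNpmem d hd)]
    congr 1
  have ht2 : ((d:ℝ))^(2/p) = ((d:ℝ)^(1/p))^2 := (hsqx _ hd0.le).symm
  have h5 : (∫ ω, (Np d ω)^2 ∂μ) / (d:ℝ)^(2/p) - ((∫ ω, Np d ω ∂μ) / (d:ℝ)^(1/p))^2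
      = variance (Np d) μ / ((d:ℝ)^(1/p))^2 := by
    rw [hvar, ht2, div_pow]
    ring
  simp only [Pi.div_apply]
  rw [h5, Real.sqrt_div (variance_nonneg _ _) _, Real.sqrt_sq ht.le]
  rcases eq_or_ne (∫ ω, Np d ω ∂μ) 0 with hb | hb
  · rw [hb, zero_div, div_zero, div_zero]
  · field_simp
end

section
/- Fix p > 0 and assume 0 < E|X|^m < ∞ for m = max(2, p). Then ‖X‖_p / E‖X‖_p → 1 in probability as d → ∞; that is, for every ε > 0, P{ |‖X‖_p / E‖X‖_p − 1| ≥ ε } → 0 as d → ∞ (relative stability of the sequence {‖X‖_p}). -/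
open MeasureTheory ProbabilityTheory Filter
open scoped NNReal ENNReal Topology

lemma aux_rpow_sub_le_small {s : ℝ} (hs0 : 0 < s) (hs1 : s ≤ 1) :
    ∀ {x y : ℝ}, 0 ≤ x → 0 ≤ y → |x ^ s - y ^ s| ≤ |x - y| ^ s := by
  have key : ∀ {x y : ℝ}, 0 ≤ y → y ≤ x → x ^ s - y ^ s ≤ (x - y) ^ s := by
    intro x y hy hxy
    have hxy' : 0 ≤ x - y := sub_nonneg.2 hxy
    have h := NNReal.rpow_add_le_add_rpow (y.toNNReal) ((x - y).toNNReal) hs0.le hs1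
    have hadd : y.toNNReal + (x - y).toNNReal = x.toNNReal := by
      ext
      simp [Real.toNNReal_add hy hxy', hy, hxy', hy.trans hxy]
    rw [hadd] at h
    have h' : (x.toNNReal : ℝ) ^ s ≤ (y.toNNReal : ℝ) ^ s + ((x - y).toNNReal : ℝ) ^ s := by
      calc (x.toNNReal : ℝ) ^ s = ((x.toNNReal ^ s : ℝ≥0) : ℝ) := by
            rw [← NNReal.coe_rpow]
        _ ≤ ((y.toNNReal ^ s + (x - y).toNNReal ^ s : ℝ≥0) : ℝ) := by exact_mod_cast h
        _ = (y.toNNReal : ℝ) ^ s + ((x - y).toNNReal : ℝ) ^ s := by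
            rw [NNReal.coe_add, ← NNReal.coe_rpow, ← NNReal.coe_rpow]
    rw [Real.coe_toNNReal _ (hy.trans hxy), Real.coe_toNNReal _ hy,
      Real.coe_toNNReal _ hxy'] at h'
    linarith
  intro x y hx hy
  rcases le_total y x with h | h
  · rw [abs_of_nonneg (sub_nonneg.2 (Real.rpow_le_rpow hy h hs0.le)),
      abs_of_nonneg (sub_nonneg.2 h)]
    exact key hy h
  · rw [abs_sub_comm, abs_sub_comm x y,
      abs_of_nonneg (sub_nonneg.2 (Real.rpow_le_rpow hx h hs0.le)),
      abs_of_nonneg (sub_nonneg.2 h)]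
    exact key hx h

lemma aux_rpow_sub_le_big {s : ℝ} (hs : 1 ≤ s) :
    ∀ {x y : ℝ}, 0 ≤ x → 0 ≤ y → |x ^ s - y ^ s| ≤ s * (x + y) ^ (s - 1) * |x - y| := by
  have key : ∀ {x y : ℝ}, 0 ≤ y → y ≤ x → x ^ s - y ^ s ≤ s * (x + y) ^ (s - 1) * (x - y) := by
    intro x y hy hxy
    rcases eq_or_lt_of_le hxy with rfl | hlt
    · simp
    · have hder : ∀ z : ℝ, HasDerivAt (fun t : ℝ => t ^ s) (s * z ^ (s - 1)) z :=
        fun z => Real.hasDerivAt_rpow_const (Or.inr hs)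
      obtain ⟨c, hc, hceq⟩ := exists_hasDerivAt_eq_slope (fun t : ℝ => t ^ s)
        (fun z => s * z ^ (s - 1)) hlt
        (fun z _ => (hder z).continuousAt.continuousWithinAt)
        (fun z _ => hder z)
      have hc0 : 0 ≤ c := hy.trans hc.1.le
      have hcle : c ≤ x + y := by nlinarith [hc.2.le]
      have : (x ^ s - y ^ s) / (x - y) ≤ s * (x + y) ^ (s - 1) := by
        rw [← hceq]
        have := Real.rpow_le_rpow hc0 hcle (sub_nonneg.2 hs)
        nlinarith [hs]
      calc x ^ s - y ^ s = (x ^ s - y ^ s) / (x - y) * (x - y) := by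
            rw [div_mul_cancel₀ _ (by linarith : x - y ≠ 0)]
        _ ≤ s * (x + y) ^ (s - 1) * (x - y) := by
            apply mul_le_mul_of_nonneg_right this (by linarith)
  intro x y hx hy
  rcases le_total y x with h | h
  · rw [abs_of_nonneg (sub_nonneg.2 (Real.rpow_le_rpow hy h (by linarith))),
      abs_of_nonneg (sub_nonneg.2 h)]
    exact key hy h
  · rw [abs_sub_comm, abs_sub_comm x y,
      abs_of_nonneg (sub_nonneg.2 (Real.rpow_le_rpow hx h (by linarith))),
      abs_of_nonneg (sub_nonneg.2 h)]
    have := key hx h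
    calc y ^ s - x ^ s ≤ s * (y + x) ^ (s - 1) * (y - x) := this
      _ = s * (x + y) ^ (s - 1) * (y - x) := by rw [add_comm]

set_option maxHeartbeats 1000000

/-- Fix `p > 0` and assume `0 < E|X|^m < ∞` for `m = max(2, p)`.  Then
`‖X‖_p / E‖X‖_p → 1` in probability as `d → ∞`: for every `ε > 0`,
`P{ |‖X‖_p / E‖X‖_p − 1| ≥ ε } → 0`. -/
theorem stmt_8 {Ω : Type*} [MeasurableSpace Ω] (μ : Measure Ω) [IsProbabilityMeasure μ]
    (X : ℕ → Ω → ℝ)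
    (hXmeas : ∀ j, Measurable (X j))
    (hindep : iIndepFun X μ)
    (hident : ∀ j, IdentDistrib (X j) (X 0) μ μ)
    (p : ℝ) (hp : 0 < p)
    (hmom : Integrable (fun ω => |X 0 ω| ^ max 2 p) μ)
    (hpos : 0 < ∫ ω, |X 0 ω| ^ max 2 p ∂μ)
    (Np : ℕ → Ω → ℝ)
    (hNp : ∀ d ω, Np d ω = (∑ j ∈ Finset.range d, |X j ω| ^ p) ^ (1 / p)) :
    ∀ ε : ℝ, 0 < ε →
      Tendsto (fun d : ℕ => μ {ω | ε ≤ |Np d ω / (∫ ω', Np d ω' ∂μ) - 1|}) atTop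
        (nhds 0) := by
  intro ε hε
  have hm2 : (2:ℝ) ≤ max 2 p := le_max_left _ _
  have hmp : p ≤ max 2 p := le_max_right _ _
  have hm0 : (0:ℝ) < max 2 p := by linarith
  set s : ℝ := 1 / p with hs_def
  have hs0 : 0 < s := by positivity
  set r : ℝ := max 2 p / p with hr_def
  have hr1 : 1 ≤ r := (one_le_div hp).2 hmp
  have hsr : s ≤ r := by
    rw [hs_def, hr_def]
    rw [div_le_div_iff₀ hp hp]
    nlinarith
  set R : ℝ≥0∞ := ENNReal.ofReal r with hR_def
  have hR1 : 1 ≤ R := ENNReal.one_le_ofReal.2 hr1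
  have hRtop : R ≠ ∞ := ENNReal.ofReal_ne_top
  have hR0 : R ≠ 0 := by
    simp only [hR_def, ne_eq, ENNReal.ofReal_eq_zero, not_le]
    linarith
  -- the p-th powers
  set Y : ℕ → Ω → ℝ := fun j ω => |X j ω| ^ p with hY_def
  have hφ : Measurable fun x : ℝ => |x| ^ p :=
    (Real.continuous_rpow_const hp.le).measurable.comp continuous_abs.measurable
  have hYmeas : ∀ j, Measurable (Y j) := fun j => hφ.comp (hXmeas j)
  have hYnonneg : ∀ j ω, 0 ≤ Y j ω := fun j ω => Real.rpow_nonneg (abs_nonneg _) _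
  have hidentY : ∀ j, IdentDistrib (Y j) (Y 0) μ μ := fun j => (hident j).comp hφ
  have hindepY : Pairwise (Function.onFun (IndepFun · · μ) Y) :=
    fun i j hij => (hindep.comp _ (fun _ => hφ)).indepFun hij
  -- moments
  have hX0m : MemLp (X 0) (ENNReal.ofReal (max 2 p)) μ := by
    have h := memLp_norm_rpow_iff (μ := μ) (p := ENNReal.ofReal (max 2 p)) (q := ENNReal.ofReal (max 2 p))
      (hXmeas 0).aestronglyMeasurable
      (by simp only [ne_eq, ENNReal.ofReal_eq_zero, not_le]; linarith) ENNReal.ofReal_ne_top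
    rw [ENNReal.div_self (by simp only [ne_eq, ENNReal.ofReal_eq_zero, not_le]; linarith)
      ENNReal.ofReal_ne_top, ENNReal.toReal_ofReal hm0.le] at h
    exact h.1 (by
      rw [memLp_one_iff_integrable]
      simpa [Real.norm_eq_abs] using hmom)
  have hY0R : MemLp (Y 0) R μ := by
    have h := memLp_norm_rpow_iff (μ := μ) (p := ENNReal.ofReal (max 2 p)) (q := ENNReal.ofReal p)
      (hXmeas 0).aestronglyMeasurable
      (by simp only [ne_eq, ENNReal.ofReal_eq_zero, not_le]; linarith) ENNReal.ofReal_ne_top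
    rw [ENNReal.toReal_ofReal hp.le] at h
    have hdiv : ENNReal.ofReal (max 2 p) / ENNReal.ofReal p = R := by
      rw [hR_def, hr_def, ENNReal.ofReal_div_of_pos hp]
    rw [hdiv] at h
    have := h.2 hX0m
    simpa [hY_def, Real.norm_eq_abs] using this
  have hYint : Integrable (Y 0) μ :=
    memLp_one_iff_integrable.1 (hY0R.mono_exponent hR1)
  set A : ℝ := ∫ ω, Y 0 ω ∂μ with hA_def
  have hA : 0 < A := by
    rcases (integral_nonneg (f := Y 0) (fun ω => hYnonneg 0 ω)).lt_or_eq with h | h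
    · exact h
    · exfalso
      have h0 : Y 0 =ᵐ[μ] 0 :=
        (integral_eq_zero_iff_of_nonneg (fun ω => hYnonneg 0 ω) hYint).1 h.symm
      have hzero : (fun ω => |X 0 ω| ^ max 2 p) =ᵐ[μ] 0 := by
        filter_upwards [h0] with ω hω
        simp only [Pi.zero_apply] at hω ⊢
        have habs : |X 0 ω| = 0 :=
          ((Real.rpow_eq_zero (abs_nonneg _) hp.ne').1 hω)
        rw [habs, Real.zero_rpow hm0.ne']
      rw [integral_congr_ae hzero] at hpos
      simp at hpos
  -- LLN
  set f : ℕ → Ω → ℝ := fun d ω => (d:ℝ)⁻¹ * ∑ j ∈ Finset.range d, Y j ω with hf_def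
  have hfmeas : ∀ d, Measurable (f d) :=
    fun d => (Finset.measurable_sum _ (fun j _ => hYmeas j)).const_mul _
  have hfnonneg : ∀ d ω, 0 ≤ f d ω :=
    fun d ω => mul_nonneg (by positivity) (Finset.sum_nonneg fun j _ => hYnonneg j ω)
  have he : Tendsto (fun d => eLpNorm (fun ω => f d ω - A) R μ) atTop (𝓝 0) := by
    have := strong_law_Lp hR1 hRtop Y hY0R hindepY hidentY
    simpa [hf_def, smul_eq_mul, hA_def] using this
  set e : ℕ → ℝ≥0∞ := fun d => eLpNorm (fun ω => f d ω - A) R μ with he_def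
  have hfR : ∀ d, MemLp (f d) R μ := fun d =>
    (memLp_finsetSum (Finset.range d)
      (fun j _ => ((hidentY j).symm.memLp_snd hY0R))).const_mul _
  set g : ℕ → Ω → ℝ := fun d ω => f d ω ^ s with hg_def
  have hgmeas : ∀ d, Measurable (g d) :=
    fun d => (Real.continuous_rpow_const hs0.le).measurable.comp (hfmeas d)
  have hgint : ∀ d, Integrable (g d) μ := by
    intro d
    have h1 : MemLp (f d) (ENNReal.ofReal s) μ :=
      (hfR d).mono_exponent (ENNReal.ofReal_le_ofReal hsr)
    have h2 := (memLp_norm_rpow_iff (μ := μ) (p := ENNReal.ofReal s) (q := ENNReal.ofReal s)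
      (hfmeas d).aestronglyMeasurable
      (by simp only [ne_eq, ENNReal.ofReal_eq_zero, not_le]; linarith)
      ENNReal.ofReal_ne_top).2 h1
    rw [ENNReal.div_self (by simp only [ne_eq, ENNReal.ofReal_eq_zero, not_le]; linarith)
      ENNReal.ofReal_ne_top, ENNReal.toReal_ofReal hs0.le, memLp_one_iff_integrable] at h2
    exact h2.congr (ae_of_all _ fun ω => by
      simp only [Real.norm_eq_abs, hg_def]
      rw [abs_of_nonneg (hfnonneg d ω)])
  set b : ℕ → ℝ := fun d => ∫ ω, g d ω ∂μ with hb_def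
  set B : ℝ := A ^ s with hB_def
  have hB : 0 < B := Real.rpow_pos_of_pos hA s
  set I : ℕ → ℝ≥0∞ := fun d => ∫⁻ ω, ENNReal.ofReal |g d ω - B| ∂μ with hI_def
  -- conversion lemma
  have conv1 : ∀ (h : Ω → ℝ), Measurable h → ∀ t : ℝ, 0 < t →
      ∫⁻ ω, (ENNReal.ofReal |h ω|) ^ t ∂μ = (eLpNorm h (ENNReal.ofReal t) μ) ^ t := by
    intro h hh t ht
    rw [eLpNorm_eq_lintegral_rpow_enorm_toReal
      (by simp only [ne_eq, ENNReal.ofReal_eq_zero, not_le]; linarith) ENNReal.ofReal_ne_top,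
      ENNReal.toReal_ofReal ht.le, ← ENNReal.rpow_mul, one_div, inv_mul_cancel₀ ht.ne',
      ENNReal.rpow_one]
    congr 1
    ext ω
    rw [Real.enorm_eq_ofReal_abs]
  have hI : Tendsto I atTop (𝓝 0) := by
    rcases le_or_gt s 1 with hs1 | hs1
    · -- case s ≤ 1
      have hb1 : ∀ d, I d ≤ (e d) ^ s := by
        intro d
        calc I d ≤ ∫⁻ ω, ENNReal.ofReal (|f d ω - A| ^ s) ∂μ := by
              refine lintegral_mono fun ω => ENNReal.ofReal_le_ofReal ?_
              exact aux_rpow_sub_le_small hs0 hs1 (hfnonneg d ω) hA.le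
          _ = ∫⁻ ω, (ENNReal.ofReal |f d ω - A|) ^ s ∂μ := by
              refine lintegral_congr fun ω => ?_
              exact (ENNReal.ofReal_rpow_of_nonneg (abs_nonneg _) hs0.le).symm
          _ = (eLpNorm (fun ω => f d ω - A) (ENNReal.ofReal s) μ) ^ s :=
              conv1 _ ((hfmeas d).sub measurable_const) s hs0
          _ ≤ (e d) ^ s := by
              refine ENNReal.rpow_le_rpow ?_ hs0.le
              exact eLpNorm_le_eLpNorm_of_exponent_le (ENNReal.ofReal_le_ofReal hsr)
                ((hfmeas d).sub measurable_const).aestronglyMeasurable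
      have hlim : Tendsto (fun d => (e d) ^ s) atTop (𝓝 0) := by
        have h2 := ((ENNReal.continuous_rpow_const (y := s)).tendsto 0).comp he
        simp only [Function.comp_def] at h2
        rwa [ENNReal.zero_rpow_of_pos hs0] at h2
      exact tendsto_of_tendsto_of_tendsto_of_le_of_le tendsto_const_nhds hlim
        (fun d => zero_le) hb1
    · -- case 1 < s
      set t : ℝ := s - 1 with ht_def
      have ht0 : 0 < t := by rw [ht_def]; linarith
      have hp1 : p < 1 := by
        by_contra hcon
        push_neg at hcon
        have hle : s ≤ 1 := by rw [hs_def, div_le_one hp]; linarith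
        linarith
      have hmeq : max 2 p = 2 := max_eq_left (by linarith)
      have hreq : r = 2 * s := by rw [hr_def, hmeq, hs_def]; ring
      have h2R : ENNReal.ofReal 2 ≤ R := by
        rw [hR_def]
        exact ENNReal.ofReal_le_ofReal (by rw [hreq]; linarith)
      have ht2R : ENNReal.ofReal (t * 2) ≤ R := by
        rw [hR_def]
        exact ENNReal.ofReal_le_ofReal (by rw [hreq, ht_def]; linarith)
      have hC2A : eLpNorm (fun _ : Ω => 2*A) R μ = ENNReal.ofReal (2*A) := by
        rw [eLpNorm_const' _ hR0 hRtop, measure_univ, ENNReal.one_rpow, mul_one,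
          Real.enorm_eq_ofReal_abs, abs_of_pos (by linarith)]
      have hN1 : ∀ d, eLpNorm (fun ω => f d ω + A) R μ ≤ e d + ENNReal.ofReal (2*A) := by
        intro d
        have heq : (fun ω => f d ω + A) = fun ω => (f d ω - A) + 2*A := funext fun ω => by ring
        rw [heq]
        calc eLpNorm (fun ω => (f d ω - A) + 2*A) R μ
            ≤ eLpNorm (fun ω => f d ω - A) R μ + eLpNorm (fun _ : Ω => 2*A) R μ := by
              exact eLpNorm_add_le (f := fun ω => f d ω - A) (g := fun _ : Ω => 2*A)
                ((hfmeas d).sub measurable_const).aestronglyMeasurable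
                aestronglyMeasurable_const hR1
          _ = e d + ENNReal.ofReal (2*A) := by rw [hC2A]
      have hbound : ∀ d, I d ≤ ENNReal.ofReal s * ((e d + ENNReal.ofReal (2*A)) ^ t * e d) := by
        intro d
        have hm1 : AEMeasurable (fun ω => (ENNReal.ofReal (f d ω + A)) ^ t) μ :=
          (ENNReal.continuous_rpow_const.measurable.comp
            ((hfmeas d).add_const A).ennreal_ofReal).aemeasurable
        have hm2 : AEMeasurable (fun ω => ENNReal.ofReal |f d ω - A|) μ :=
          (((hfmeas d).sub measurable_const).abs.ennreal_ofReal).aemeasurable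
        have step1 : I d ≤ ENNReal.ofReal s *
            ∫⁻ ω, (ENNReal.ofReal (f d ω + A)) ^ t * ENNReal.ofReal |f d ω - A| ∂μ := by
          rw [← lintegral_const_mul' _ _ ENNReal.ofReal_ne_top]
          refine lintegral_mono fun ω => ?_
          calc ENNReal.ofReal |g d ω - B|
              ≤ ENNReal.ofReal (s * ((f d ω + A)^t * |f d ω - A|)) := by
                refine ENNReal.ofReal_le_ofReal ?_
                have h := aux_rpow_sub_le_big hs1.le (hfnonneg d ω) hA.le
                calc |g d ω - B| ≤ s * (f d ω + A) ^ (s-1) * |f d ω - A| := h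
                  _ = s * ((f d ω + A)^t * |f d ω - A|) := by rw [ht_def]; ring
            _ = ENNReal.ofReal s *
                ((ENNReal.ofReal (f d ω + A))^t * ENNReal.ofReal |f d ω - A|) := by
                rw [ENNReal.ofReal_mul hs0.le,
                  ENNReal.ofReal_mul (Real.rpow_nonneg (by positivity) _),
                  ENNReal.ofReal_rpow_of_nonneg (by positivity) ht0.le]
        have step2 : ∫⁻ ω, (ENNReal.ofReal (f d ω + A)) ^ t * ENNReal.ofReal |f d ω - A| ∂μ
            ≤ (e d + ENNReal.ofReal (2*A)) ^ t * e d := by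
          have hconj : Real.HolderConjugate 2 2 := ⟨by norm_num, by norm_num, by norm_num⟩
          have hH := ENNReal.lintegral_mul_le_Lp_mul_Lq μ hconj hm1 hm2
          simp only [Pi.mul_apply] at hH
          refine le_trans hH (mul_le_mul' ?_ ?_)
          · -- first factor
            have heq1 : ∫⁻ ω, ((ENNReal.ofReal (f d ω + A)) ^ t) ^ (2:ℝ) ∂μ
                = (eLpNorm (fun ω => f d ω + A) (ENNReal.ofReal (t*2)) μ) ^ (t*2) := by
              rw [← conv1 (fun ω => f d ω + A) ((hfmeas d).add_const A) (t*2)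
                (by positivity)]
              refine lintegral_congr fun ω => ?_
              rw [abs_of_nonneg (by positivity), ENNReal.rpow_mul]
            rw [heq1, ← ENNReal.rpow_mul]
            have hexp : t * 2 * (1/2) = t := by ring
            rw [hexp]
            refine ENNReal.rpow_le_rpow ?_ ht0.le
            exact le_trans (eLpNorm_le_eLpNorm_of_exponent_le ht2R
              ((hfmeas d).add_const A).aestronglyMeasurable) (hN1 d)
          · -- second factor
            have heq2 : ∫⁻ ω, (ENNReal.ofReal |f d ω - A|) ^ (2:ℝ) ∂μ
                = (eLpNorm (fun ω => f d ω - A) (ENNReal.ofReal 2) μ) ^ (2:ℝ) :=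
              conv1 _ ((hfmeas d).sub measurable_const) 2 two_pos
            rw [heq2, ← ENNReal.rpow_mul]
            norm_num
            have h2R' : (2:ℝ≥0∞) ≤ R := by rwa [ENNReal.ofReal_ofNat] at h2R
            exact eLpNorm_le_eLpNorm_of_exponent_le h2R'
              ((hfmeas d).sub measurable_const).aestronglyMeasurable
        calc I d ≤ ENNReal.ofReal s *
              ∫⁻ ω, (ENNReal.ofReal (f d ω + A)) ^ t * ENNReal.ofReal |f d ω - A| ∂μ := step1
          _ ≤ ENNReal.ofReal s * ((e d + ENNReal.ofReal (2*A)) ^ t * e d) :=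
              mul_le_mul_right step2 _
      have hev : ∀ᶠ d in atTop,
          I d ≤ (ENNReal.ofReal s * (1 + ENNReal.ofReal (2*A))^t) * e d := by
        filter_upwards [ENNReal.tendsto_nhds_zero.1 he 1 one_pos] with d hd
        calc I d ≤ ENNReal.ofReal s * ((e d + ENNReal.ofReal (2*A)) ^ t * e d) := hbound d
          _ ≤ ENNReal.ofReal s * ((1 + ENNReal.ofReal (2*A)) ^ t * e d) := by
              gcongr
          _ = (ENNReal.ofReal s * (1 + ENNReal.ofReal (2*A))^t) * e d := by ring
      have hCt : (ENNReal.ofReal s * (1 + ENNReal.ofReal (2*A))^t) ≠ ∞ := by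
        refine ENNReal.mul_ne_top ENNReal.ofReal_ne_top ?_
        exact (ENNReal.rpow_lt_top_of_nonneg ht0.le
          (by simp [ENNReal.add_eq_top, ENNReal.mul_eq_top])).ne
      have hlim : Tendsto (fun d => (ENNReal.ofReal s * (1 + ENNReal.ofReal (2*A))^t) * e d)
          atTop (𝓝 0) := by
        have h := ENNReal.Tendsto.const_mul he (Or.inr hCt)
        simpa using h
      exact tendsto_of_tendsto_of_tendsto_of_le_of_le' tendsto_const_nhds hlim
        (Eventually.of_forall fun d => zero_le) hev
  -- b converges to B
  have hb : Tendsto b atTop (𝓝 B) := by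
    rw [tendsto_iff_dist_tendsto_zero]
    refine squeeze_zero (g := fun d => (I d).toReal) (fun d => dist_nonneg) ?_ ?_
    · intro d
      rw [Real.dist_eq]
      have h1 : b d - B = ∫ ω, (g d ω - B) ∂μ := by
        rw [integral_sub (hgint d) (integrable_const B), integral_const, probReal_univ,
          one_smul]
      rw [h1]
      calc |∫ ω, (g d ω - B) ∂μ| ≤ ∫ ω, |g d ω - B| ∂μ := by
            simpa [Real.norm_eq_abs] using
              norm_integral_le_integral_norm (fun ω => g d ω - B) (μ := μ)
        _ = (I d).toReal := by
            rw [hI_def, integral_eq_lintegral_of_nonneg_ae (f := fun ω => |g d ω - B|) (ae_of_all _ fun ω => abs_nonneg _)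
              ((hgmeas d).sub measurable_const).abs.aestronglyMeasurable]
    · simpa [Function.comp_def] using (ENNReal.tendsto_toReal (a := 0) (by simp)).comp hI
  -- convergence in measure of f to A
  have hfprob : TendstoInMeasure μ f atTop (fun _ => A) := by
    apply tendstoInMeasure_of_tendsto_eLpNorm hR0
      (fun d => (hfmeas d).aestronglyMeasurable) aestronglyMeasurable_const
    exact he
  -- continuity of rpow at A
  have hcont : ContinuousAt (fun x : ℝ => x ^ s) A :=
    Real.continuousAt_rpow_const A s (Or.inl hA.ne')
  obtain ⟨η, hη0, hη⟩ := Metric.continuousAt_iff.1 hcont (ε * B / 4) (by positivity)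
  -- final squeeze
  apply tendsto_of_tendsto_of_tendsto_of_le_of_le' tendsto_const_nhds (hfprob (ENNReal.ofReal η) (ENNReal.ofReal_pos.2 hη0))
  · exact Eventually.of_forall fun d => zero_le
  · have hev1 : ∀ᶠ d in atTop, |b d - B| < min (B/2) (ε*B/4) := by
      have h := Metric.tendsto_nhds.1 hb (min (B/2) (ε*B/4)) (by positivity)
      exact h.mono fun d hd => by rwa [Real.dist_eq] at hd
    filter_upwards [hev1, eventually_ge_atTop 1] with d hd1 hd2
    apply measure_mono
    intro ω hω
    simp only [Set.mem_setOf_eq] at hω ⊢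
    have hdpos : (0:ℝ) < (d:ℝ) := by exact_mod_cast hd2
    have hdspos : (0:ℝ) < (d:ℝ) ^ s := Real.rpow_pos_of_pos hdpos s
    have hbB1 : |b d - B| < B/2 := lt_of_lt_of_le hd1 (min_le_left _ _)
    have hbB2 : |b d - B| < ε*B/4 := lt_of_lt_of_le hd1 (min_le_right _ _)
    have hbdpos : B/2 < b d := by
      have := abs_lt.1 hbB1
      linarith [this.1]
    have hb0 : 0 < b d := lt_trans (by positivity) hbdpos
    -- rewrite Np
    have hfun : ∀ ω', Np d ω' = (d:ℝ)^s * g d ω' := by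
      intro ω'
      rw [hNp]
      have hsum : ∑ j ∈ Finset.range d, |X j ω'| ^ p = (d:ℝ) * f d ω' := by
        rw [hf_def]
        rw [← mul_assoc, mul_inv_cancel₀ hdpos.ne', one_mul]
      rw [hsum, Real.mul_rpow hdpos.le (hfnonneg d ω')]
    have hNpint : ∫ ω', Np d ω' ∂μ = (d:ℝ)^s * b d := by
      simp only [hfun]
      rw [hb_def]
      simpa [smul_eq_mul] using integral_smul ((d:ℝ)^s) (g d) (μ := μ)
    rw [hfun ω, hNpint, mul_div_mul_left _ _ hdspos.ne'] at hω
    -- hω : ε ≤ |g d ω / b d - 1|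
    have hfrac : g d ω / b d - 1 = (g d ω - b d) / b d := by field_simp
    rw [hfrac, abs_div, abs_of_pos hb0, le_div_iff₀ hb0] at hω
    -- hω : ε * b d ≤ |g d ω - b d|
    have htri : |g d ω - b d| ≤ |g d ω - B| + |B - b d| := abs_sub_le _ _ _
    have hBb : |B - b d| = |b d - B| := abs_sub_comm _ _
    have h3 : ε * B / 4 ≤ |g d ω - B| := by
      have h4 : ε * (B/2) ≤ ε * b d := mul_le_mul_of_nonneg_left hbdpos.le hε.le
      linarith
    -- conclude
    by_contra hcon
    push_neg at hcon
    have := hη (x := f d ω) (by rwa [edist_dist, ENNReal.ofReal_lt_ofReal_iff hη0] at hcon)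
    rw [Real.dist_eq] at this
    have : |g d ω - B| < ε * B / 4 := this
    linarith
end

section
/- Fix p ≥ 1 and assume that for some constant C > 0 the random variable X satisfies 0 < |X| ≤ C almost surely. Then for every ε > 0, as d → ∞, P{ |‖X‖_p / E‖X‖_p − 1| ≥ ε } ≤ 2 exp( − ε² d^{2/p − 1} μ_p^{2/p} / (2C²) + o(d^{2/p − 1}) ); more precisely, P{ |‖X‖_p − E‖X‖_p| ≥ ε E‖X‖_p } ≤ 2 exp( − ε² (E‖X‖_p)² / (2 d C²) ) for every d ≥ 1. -/
open MeasureTheory ProbabilityTheory Filter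

lemma aux_rpow_subadd {q : ℝ} (hq0 : 0 ≤ q) (hq1 : q ≤ 1) {s u : ℝ} (hs : 0 ≤ s) (hu : 0 ≤ u) :
    (s + u) ^ q ≤ s ^ q + u ^ q := by
  have h := NNReal.rpow_add_le_add_rpow s.toNNReal u.toNNReal hq0 hq1
  have := NNReal.coe_le_coe.2 h
  push_cast at this
  rwa [Real.coe_toNNReal _ hs, Real.coe_toNNReal _ hu] at this

lemma aux_integrable_of_bdd {α : Type*} [MeasurableSpace α] {ν : Measure α}
    [IsFiniteMeasure ν] {g : α → ℝ} (hg : Measurable g) {K : ℝ} (hK : ∀ x, |g x| ≤ K) :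
    Integrable g ν :=
  (integrable_const K).mono' hg.aestronglyMeasurable (ae_of_all _ fun x => by
    simpa [Real.norm_eq_abs] using hK x)

lemma aux_hoeffding {α : Type*} [MeasurableSpace α] (ν : Measure α) [IsProbabilityMeasure ν]
    {h : α → ℝ} (hmeas : Measurable h) {B : ℝ} (hB : ∀ a, |h a| ≤ B)
    {c : ℝ} (hc : 0 ≤ c) (hdiff : ∀ a b, |h a - h b| ≤ c) (L : ℝ) :
    ∫ a, Real.exp (L * h a) ∂ν ≤ Real.exp (L * ∫ a, h a ∂ν + L ^ 2 * c ^ 2 / 2) := by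
  have hint : Integrable h ν := aux_integrable_of_bdd hmeas hB
  set m := ∫ a, h a ∂ν with hm
  have hkey : ∀ a, |h a - m| ≤ c := by
    intro a
    have h1 : h a - m = ∫ b, (h a - h b) ∂ν := by
      rw [integral_sub (integrable_const _) hint, integral_const, probReal_univ]
      simp [hm]
    rw [h1]
    calc |∫ b, (h a - h b) ∂ν| ≤ ∫ b, |h a - h b| ∂ν := by
          simpa [Real.norm_eq_abs] using
            norm_integral_le_integral_norm (μ := ν) (f := fun b => h a - h b)
      _ ≤ ∫ _b, c ∂ν := by
          refine integral_mono ((integrable_const (h a)).sub hint).abs (integrable_const c) ?_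
          intro b; exact hdiff a b
      _ = c := by simp
  rcases eq_or_lt_of_le hc with hc0 | hcpos
  · have hconst : ∀ a, Real.exp (L * h a) = Real.exp (L * m) := by
      intro a
      have h2 := hkey a; rw [← hc0] at h2
      have h3 : h a - m = 0 := by
        have := abs_nonpos_iff.1 h2; exact this
      have : h a = m := by linarith [sub_eq_zero.1 h3]
      rw [this]
    calc ∫ a, Real.exp (L * h a) ∂ν = ∫ _a, Real.exp (L * m) ∂ν :=
          integral_congr_ae (ae_of_all _ hconst)
      _ = Real.exp (L * m) := by simp
      _ ≤ Real.exp (L * m + L ^ 2 * c ^ 2 / 2) := by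
          apply Real.exp_le_exp.2; nlinarith [sq_nonneg (L * c)]
  · have hcne : c ≠ 0 := ne_of_gt hcpos
    have hpt : ∀ a, Real.exp (L * h a) ≤
        Real.exp (L * m) * (Real.cosh (L * c) + ((h a - m) / c) * Real.sinh (L * c)) := by
      intro a
      set z := h a - m with hz
      have hzc : |z| ≤ c := hkey a
      have hz1 : -c ≤ z := neg_le_of_abs_le hzc
      have hz2 : z ≤ c := le_of_abs_le hzc
      set t := (z + c) / (2 * c) with htdef
      have ht0 : (0:ℝ) ≤ t := div_nonneg (by linarith) (by linarith)
      have ht1 : (0:ℝ) ≤ 1 - t := by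
        rw [htdef]; rw [sub_nonneg, div_le_one (by positivity)]; linarith
      have hsum : t + (1 - t) = 1 := by ring
      have hcvx := convexOn_exp.2 (Set.mem_univ (L * c)) (Set.mem_univ (-(L * c)))
        ht0 ht1 hsum
      have harg : t • (L * c) + (1 - t) • (-(L * c)) = L * z := by
        simp only [smul_eq_mul, htdef]
        field_simp
        ring
      rw [harg] at hcvx
      have hexp : Real.exp (L * h a) = Real.exp (L * m) * Real.exp (L * z) := by
        rw [← Real.exp_add, hz]; ring_nf
      rw [hexp]
      have hrhs : t • Real.exp (L * c) + (1 - t) • Real.exp (-(L * c))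
          = Real.cosh (L * c) + (z / c) * Real.sinh (L * c) := by
        simp only [smul_eq_mul, htdef, Real.cosh_eq, Real.sinh_eq]
        field_simp
        ring
      rw [hrhs] at hcvx
      have := mul_le_mul_of_nonneg_left hcvx (Real.exp_nonneg (L * m))
      exact this
    have hintL : Integrable (fun a => Real.exp (L * h a)) ν := by
      refine aux_integrable_of_bdd ((hmeas.const_mul L).exp) (K := Real.exp (|L| * B)) ?_
      intro a
      rw [abs_of_nonneg (Real.exp_nonneg _)]
      apply Real.exp_le_exp.2
      calc L * h a ≤ |L * h a| := le_abs_self _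
        _ = |L| * |h a| := abs_mul _ _
        _ ≤ |L| * B := by
            have := hB a
            have h0B : (0:ℝ) ≤ |h a| := abs_nonneg _
            nlinarith [abs_nonneg L]
    have hintR : Integrable
        (fun a => Real.exp (L * m) * (Real.cosh (L * c) + ((h a - m) / c) * Real.sinh (L * c)))
        ν := by
      apply Integrable.const_mul
      exact (integrable_const _).add
        ((((hint.sub (integrable_const m)).div_const c).mul_const _))
    calc ∫ a, Real.exp (L * h a) ∂ν
        ≤ ∫ a, Real.exp (L * m) *
            (Real.cosh (L * c) + ((h a - m) / c) * Real.sinh (L * c)) ∂ν :=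
          integral_mono hintL hintR hpt
      _ = Real.exp (L * m) * Real.cosh (L * c) := by
          have hint2 : Integrable (fun a => (h a - m) / c * Real.sinh (L * c)) ν :=
            ((hint.sub (integrable_const m)).div_const c).mul_const _
          rw [integral_const_mul]
          have : ∫ a, (Real.cosh (L * c) + ((h a - m) / c) * Real.sinh (L * c)) ∂ν
              = Real.cosh (L * c) := by
            rw [integral_add (integrable_const _) hint2]
            have hz : ∫ a, (h a - m) / c ∂ν = 0 := by
              rw [integral_div, integral_sub hint (integrable_const m)]
              simp [hm]
            rw [integral_mul_const, hz]
            simp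
          rw [this]
      _ ≤ Real.exp (L * m) * Real.exp ((L * c) ^ 2 / 2) := by
          have := Real.cosh_le_exp_half_sq (L * c)
          exact mul_le_mul_of_nonneg_left this (Real.exp_nonneg _)
      _ = Real.exp (L * m + L ^ 2 * c ^ 2 / 2) := by
          rw [← Real.exp_add]; ring_nf

lemma aux_chernoff_one {α : Type*} [MeasurableSpace α] (ν : Measure α) [IsProbabilityMeasure ν]
    {f : α → ℝ} (hmeas : Measurable f) {B : ℝ} (hB : ∀ x, |f x| ≤ B) {v : ℝ} (hv : 0 < v)
    (hmgf : ∀ L : ℝ, ∫ x, Real.exp (L * f x) ∂ν ≤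
      Real.exp (L * ∫ x, f x ∂ν + L ^ 2 * v / 2))
    {t : ℝ} (ht : 0 < t) :
    (ν {x | t ≤ f x - ∫ x, f x ∂ν}).toReal ≤ Real.exp (-t ^ 2 / (2 * v)) := by
  set m := ∫ x, f x ∂ν with hm
  set L := t / v with hL
  have hLpos : 0 < L := div_pos ht hv
  set G : α → ℝ := fun x => Real.exp (L * (f x - m)) with hG
  have hGmeas : Measurable G := ((hmeas.sub_const m).const_mul L).exp
  have hGbdd : ∀ x, |G x| ≤ Real.exp (|L| * (B + |m|)) := by
    intro x
    rw [abs_of_nonneg (Real.exp_nonneg _)]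
    apply Real.exp_le_exp.2
    calc L * (f x - m) ≤ |L * (f x - m)| := le_abs_self _
      _ = |L| * |f x - m| := abs_mul _ _
      _ ≤ |L| * (B + |m|) := by
          have h1 : |f x - m| ≤ |f x| + |m| := abs_sub _ _
          have h2 := hB x
          nlinarith [abs_nonneg L, abs_nonneg (f x), abs_nonneg m]
  have hGint : Integrable G ν := aux_integrable_of_bdd hGmeas hGbdd
  have hGnn : 0 ≤ᵐ[ν] G := ae_of_all _ fun x => Real.exp_nonneg _
  have hmarkov := mul_meas_ge_le_integral_of_nonneg hGnn hGint (Real.exp (L * t))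
  have hsub : {x | t ≤ f x - m} ⊆ {x | Real.exp (L * t) ≤ G x} := by
    intro x hx
    simp only [Set.mem_setOf_eq] at hx ⊢
    exact Real.exp_le_exp.2 (mul_le_mul_of_nonneg_left hx hLpos.le)
  have hmono : (ν {x | t ≤ f x - m}).toReal ≤ (ν {x | Real.exp (L * t) ≤ G x}).toReal := by
    apply ENNReal.toReal_mono (measure_ne_top _ _)
    exact measure_mono hsub
  have hGval : ∫ x, G x ∂ν ≤ Real.exp (L ^ 2 * v / 2) := by
    have h1 : ∀ x, G x = Real.exp (-(L * m)) * Real.exp (L * f x) := by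
      intro x; simp only [hG, ← Real.exp_add]; ring_nf
    calc ∫ x, G x ∂ν = Real.exp (-(L * m)) * ∫ x, Real.exp (L * f x) ∂ν := by
          rw [← integral_const_mul]; exact integral_congr_ae (ae_of_all _ h1)
      _ ≤ Real.exp (-(L * m)) * Real.exp (L * m + L ^ 2 * v / 2) :=
          mul_le_mul_of_nonneg_left (hmgf L) (Real.exp_nonneg _)
      _ = Real.exp (L ^ 2 * v / 2) := by rw [← Real.exp_add]; ring_nf
  have hexp_pos : (0:ℝ) < Real.exp (L * t) := Real.exp_pos _
  have hfinal : (ν {x | Real.exp (L * t) ≤ G x}).toReal ≤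
      Real.exp (L ^ 2 * v / 2) / Real.exp (L * t) := by
    rw [le_div_iff₀ hexp_pos]
    calc (ν {x | Real.exp (L * t) ≤ G x}).toReal * Real.exp (L * t)
        = Real.exp (L * t) * (ν {x | Real.exp (L * t) ≤ G x}).toReal := mul_comm _ _
      _ ≤ ∫ x, G x ∂ν := hmarkov
      _ ≤ Real.exp (L ^ 2 * v / 2) := hGval
  have hval : Real.exp (L ^ 2 * v / 2) / Real.exp (L * t) = Real.exp (-t ^ 2 / (2 * v)) := by
    rw [← Real.exp_sub]
    congr 1
    field_simp [hL]
    rw [hL]; field_simp [hv.ne']; ring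
  calc (ν {x | t ≤ f x - m}).toReal ≤ (ν {x | Real.exp (L * t) ≤ G x}).toReal := hmono
    _ ≤ Real.exp (L ^ 2 * v / 2) / Real.exp (L * t) := hfinal
    _ = Real.exp (-t ^ 2 / (2 * v)) := hval

lemma aux_chernoff_two {α : Type*} [MeasurableSpace α] (ν : Measure α) [IsProbabilityMeasure ν]
    {f : α → ℝ} (hmeas : Measurable f) {B : ℝ} (hB : ∀ x, |f x| ≤ B) {v : ℝ} (hv : 0 < v)
    (hmgf : ∀ L : ℝ, ∫ x, Real.exp (L * f x) ∂ν ≤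
      Real.exp (L * ∫ x, f x ∂ν + L ^ 2 * v / 2))
    {t : ℝ} (ht : 0 < t) :
    (ν {x | t ≤ |f x - ∫ x, f x ∂ν|}).toReal ≤ 2 * Real.exp (-t ^ 2 / (2 * v)) := by
  set m := ∫ x, f x ∂ν with hm
  set g : α → ℝ := fun x => -(f x) with hg
  have hgmeas : Measurable g := hmeas.neg
  have hgB : ∀ x, |g x| ≤ B := fun x => by rw [hg]; simpa using hB x
  have hneg_int : ∫ x, g x ∂ν = -m := by rw [hg, hm, integral_neg]
  have hmgf' : ∀ L : ℝ, ∫ x, Real.exp (L * g x) ∂ν ≤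
      Real.exp (L * ∫ x, g x ∂ν + L ^ 2 * v / 2) := by
    intro L
    calc ∫ x, Real.exp (L * g x) ∂ν = ∫ x, Real.exp ((-L) * f x) ∂ν := by
          apply integral_congr_ae (ae_of_all _ fun x => ?_)
          show Real.exp (L * g x) = Real.exp (-L * f x)
          rw [hg]; ring_nf
      _ ≤ Real.exp ((-L) * m + (-L) ^ 2 * v / 2) := hmgf (-L)
      _ = Real.exp (L * ∫ x, g x ∂ν + L ^ 2 * v / 2) := by
          rw [hneg_int]; ring_nf
  have h1 := aux_chernoff_one ν hmeas hB hv hmgf ht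
  have h2 := aux_chernoff_one ν hgmeas hgB hv hmgf' ht
  rw [hneg_int] at h2
  rw [← hm] at h1
  have hunion : {x | t ≤ |f x - m|} ⊆ {x | t ≤ f x - m} ∪ {x | t ≤ g x - -m} := by
    intro x hx
    simp only [Set.mem_setOf_eq, Set.mem_union, hg] at hx ⊢
    rcases abs_cases (f x - m) with ⟨he, _⟩ | ⟨he, _⟩
    · left; linarith
    · right; linarith
  calc (ν {x | t ≤ |f x - m|}).toReal
      ≤ (ν ({x | t ≤ f x - m} ∪ {x | t ≤ g x - -m})).toReal := by
        apply ENNReal.toReal_mono (measure_ne_top _ _) (measure_mono hunion)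
    _ ≤ (ν {x | t ≤ f x - m}).toReal + (ν {x | t ≤ g x - -m}).toReal := by
        rw [← ENNReal.toReal_add (measure_ne_top _ _) (measure_ne_top _ _)]
        apply ENNReal.toReal_mono
        · exact ENNReal.add_ne_top.2 ⟨measure_ne_top _ _, measure_ne_top _ _⟩
        · exact measure_union_le _ _
    _ ≤ 2 * Real.exp (-t ^ 2 / (2 * v)) := by linarith

lemma aux_abs_integral_le {α : Type*} [MeasurableSpace α] (ν : Measure α)
    [IsProbabilityMeasure ν] {G : α → ℝ} (hG : Measurable G) {K : ℝ} (hK : ∀ a, |G a| ≤ K) :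
    |∫ a, G a ∂ν| ≤ K := by
  calc |∫ a, G a ∂ν| ≤ ∫ a, |G a| ∂ν := by
        simpa [Real.norm_eq_abs] using norm_integral_le_integral_norm (μ := ν) (f := G)
    _ ≤ ∫ _a, K ∂ν := integral_mono (aux_integrable_of_bdd hG hK).abs (integrable_const K)
        (fun a => hK a)
    _ = K := by simp

lemma aux_exp_bdd {u B L : ℝ} (hu : |u| ≤ B) : |Real.exp (L * u)| ≤ Real.exp (|L| * B) := by
  rw [abs_of_nonneg (Real.exp_nonneg _)]
  apply Real.exp_le_exp.2
  calc L * u ≤ |L * u| := le_abs_self _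
    _ = |L| * |u| := abs_mul _ _
    _ ≤ |L| * B := by nlinarith [abs_nonneg L, abs_nonneg u]

lemma aux_mgf_pi (ν : Measure ℝ) [IsProbabilityMeasure ν] {C : ℝ} (hC : 0 ≤ C) :
    ∀ (d : ℕ) (f : (Fin d → ℝ) → ℝ), Measurable f → ∀ B : ℝ, (∀ x, |f x| ≤ B) →
      (∀ (i : Fin d) (x y : Fin d → ℝ), (∀ j, j ≠ i → x j = y j) → |f x - f y| ≤ C) →
      ∀ L : ℝ,
      ∫ x, Real.exp (L * f x) ∂(Measure.pi fun _ : Fin d => ν) ≤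
        Real.exp (L * ∫ x, f x ∂(Measure.pi fun _ : Fin d => ν) + L ^ 2 * d * C ^ 2 / 2) := by
  intro d
  induction d with
  | zero =>
    intro f hf B hB hdiff L
    have hconst : ∀ x : Fin 0 → ℝ, f x = f (fun i => i.elim0) := fun x =>
      congrArg f (Subsingleton.elim _ _)
    have h1 : ∫ x, Real.exp (L * f x) ∂(Measure.pi fun _ : Fin 0 => ν)
        = Real.exp (L * f (fun i => i.elim0)) := by
      rw [integral_congr_ae (ae_of_all _ fun x => by
        show Real.exp (L * f x) = Real.exp (L * f (fun i => i.elim0)); rw [hconst x])]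
      simp [measure_univ]
    have h2 : ∫ x, f x ∂(Measure.pi fun _ : Fin 0 => ν) = f (fun i => i.elim0) := by
      rw [integral_congr_ae (ae_of_all _ fun x => hconst x)]
      simp [measure_univ]
    rw [h1, h2]; simp
  | succ d ih =>
    intro f hf B hB hdiff L
    set π1 := (Measure.pi fun _ : Fin (d+1) => ν) with hπ1
    set π0 := (Measure.pi fun _ : Fin d => ν) with hπ0
    set e := MeasurableEquiv.piFinSuccAbove (fun _ : Fin (d+1) => ℝ) (Fin.last d) with he
    have mp : MeasurePreserving e π1 (ν.prod π0) :=
      measurePreserving_piFinSuccAbove (fun _ : Fin (d+1) => ν) (Fin.last d)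
    set F : ℝ × (Fin d → ℝ) → ℝ := fun z => f (e.symm z) with hF
    have hFmeas : Measurable F := hf.comp e.symm.measurable
    have hFB : ∀ z, |F z| ≤ B := fun z => hB _
    have hsymm : ∀ (a : ℝ) (y : Fin d → ℝ), e.symm (a, y) = Fin.insertNth (Fin.last d) a y := by
      intro a y
      rw [he]
      rfl
    have hdiff1 : ∀ (y : Fin d → ℝ) (a b : ℝ), |F (a, y) - F (b, y)| ≤ C := by
      intro y a b
      rw [hF]
      simp only []
      rw [hsymm, hsymm]
      apply hdiff (Fin.last d)
      intro j hj
      obtain ⟨k, hk⟩ := Fin.exists_succAbove_eq hj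
      rw [← hk, Fin.insertNth_apply_succAbove, Fin.insertNth_apply_succAbove]
    set g : (Fin d → ℝ) → ℝ := fun y => ∫ a, F (a, y) ∂ν with hg
    have hgmeas : Measurable g := hFmeas.stronglyMeasurable.integral_prod_left'.measurable
    have hgB : ∀ y, |g y| ≤ B := fun y =>
      aux_abs_integral_le ν (hFmeas.comp (measurable_id.prodMk measurable_const))
        (fun a => hFB (a, y))
    have hgdiff : ∀ (i : Fin d) (y y' : Fin d → ℝ), (∀ j, j ≠ i → y j = y' j) →
        |g y - g y'| ≤ C := by
      intro i y y' hyy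
      have hptw : ∀ a : ℝ, |F (a, y) - F (a, y')| ≤ C := by
        intro a
        rw [hF]
        simp only []
        rw [hsymm, hsymm]
        apply hdiff ((Fin.last d).succAbove i)
        intro j hj
        rcases Fin.eq_castSucc_or_eq_last j with ⟨k, hk⟩ | hk
        · subst hk
          rw [← Fin.succAbove_last, Fin.insertNth_apply_succAbove,
            Fin.insertNth_apply_succAbove]
          apply hyy
          intro hki
          apply hj
          rw [hki, Fin.succAbove_last]
        · subst hk
          rw [Fin.insertNth_apply_same, Fin.insertNth_apply_same]
      have hint1 : Integrable (fun a => F (a, y)) ν :=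
        aux_integrable_of_bdd (hFmeas.comp (measurable_id.prodMk measurable_const))
          (fun a => hFB (a, y))
      have hint2 : Integrable (fun a => F (a, y')) ν :=
        aux_integrable_of_bdd (hFmeas.comp (measurable_id.prodMk measurable_const))
          (fun a => hFB (a, y'))
      have : g y - g y' = ∫ a, (F (a, y) - F (a, y')) ∂ν := (integral_sub hint1 hint2).symm
      rw [this]
      exact aux_abs_integral_le ν
        ((hFmeas.comp (measurable_id.prodMk measurable_const)).sub
          (hFmeas.comp (measurable_id.prodMk measurable_const))) hptw
    have inner : ∀ y, ∫ a, Real.exp (L * F (a, y)) ∂ν ≤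
        Real.exp (L * g y + L ^ 2 * C ^ 2 / 2) := by
      intro y
      exact aux_hoeffding ν (hFmeas.comp (measurable_id.prodMk measurable_const))
        (fun a => hFB (a, y)) hC (fun a b => hdiff1 y a b) L
    have hexpint : Integrable (fun z => Real.exp (L * F z)) (ν.prod π0) :=
      aux_integrable_of_bdd ((hFmeas.const_mul L).exp) (fun z => aux_exp_bdd (hFB z))
    have step1 : ∫ x, Real.exp (L * f x) ∂π1 = ∫ z, Real.exp (L * F z) ∂(ν.prod π0) := by
      rw [← mp.integral_comp e.measurableEmbedding]
      apply integral_congr_ae (ae_of_all _ fun x => ?_)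
      show Real.exp (L * f x) = Real.exp (L * F (e x))
      rw [hF]
      simp only []
      rw [MeasurableEquiv.symm_apply_apply]
    have step2 : ∫ z, Real.exp (L * F z) ∂(ν.prod π0)
        = ∫ y, ∫ a, Real.exp (L * F (a, y)) ∂ν ∂π0 := by
      rw [integral_prod _ hexpint]
      exact integral_integral_swap hexpint
    have hlhsint : Integrable (fun y => ∫ a, Real.exp (L * F (a, y)) ∂ν) π0 := by
      refine aux_integrable_of_bdd ?_ (K := Real.exp (|L| * B)) ?_
      · exact ((hFmeas.const_mul L).exp.stronglyMeasurable.integral_prod_left').measurable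
      · intro y
        exact aux_abs_integral_le ν
          (((hFmeas.comp (measurable_id.prodMk measurable_const)).const_mul L).exp)
          (fun a => aux_exp_bdd (hFB (a, y)))
    have hrhsint : Integrable (fun y => Real.exp (L * g y + L ^ 2 * C ^ 2 / 2)) π0 := by
      refine aux_integrable_of_bdd ((hgmeas.const_mul L).add_const _).exp
        (K := Real.exp (|L| * B + L ^ 2 * C ^ 2 / 2)) ?_
      intro y
      rw [abs_of_nonneg (Real.exp_nonneg _)]
      apply Real.exp_le_exp.2
      have h1 := aux_exp_bdd (L := L) (hgB y)
      have h2 : L * g y ≤ |L| * B := by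
        calc L * g y ≤ |L * g y| := le_abs_self _
          _ = |L| * |g y| := abs_mul _ _
          _ ≤ |L| * B := by nlinarith [abs_nonneg L, abs_nonneg (g y), hgB y]
      linarith
    have step3 : ∫ y, ∫ a, Real.exp (L * F (a, y)) ∂ν ∂π0
        ≤ ∫ y, Real.exp (L * g y + L ^ 2 * C ^ 2 / 2) ∂π0 :=
      integral_mono hlhsint hrhsint inner
    have step4 : ∫ y, Real.exp (L * g y + L ^ 2 * C ^ 2 / 2) ∂π0
        = Real.exp (L ^ 2 * C ^ 2 / 2) * ∫ y, Real.exp (L * g y) ∂π0 := by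
      rw [← integral_const_mul]
      apply integral_congr_ae (ae_of_all _ fun y => ?_)
      show Real.exp (L * g y + L ^ 2 * C ^ 2 / 2)
        = Real.exp (L ^ 2 * C ^ 2 / 2) * Real.exp (L * g y)
      rw [← Real.exp_add]; ring_nf
    have step5 := ih g hgmeas B hgB hgdiff L
    have hFint : Integrable F (ν.prod π0) := aux_integrable_of_bdd hFmeas hFB
    have step6 : ∫ y, g y ∂π0 = ∫ x, f x ∂π1 := by
      have h1 : ∫ y, g y ∂π0 = ∫ z, F z ∂(ν.prod π0) := by
        rw [integral_prod _ hFint]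
        exact (integral_integral_swap hFint).symm
      rw [h1, ← mp.integral_comp e.measurableEmbedding]
      apply integral_congr_ae (ae_of_all _ fun x => ?_)
      show F (e x) = f x
      rw [hF]
      simp only []
      rw [MeasurableEquiv.symm_apply_apply]
    calc ∫ x, Real.exp (L * f x) ∂π1
        = ∫ y, ∫ a, Real.exp (L * F (a, y)) ∂ν ∂π0 := by rw [step1, step2]
      _ ≤ ∫ y, Real.exp (L * g y + L ^ 2 * C ^ 2 / 2) ∂π0 := step3
      _ = Real.exp (L ^ 2 * C ^ 2 / 2) * ∫ y, Real.exp (L * g y) ∂π0 := step4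
      _ ≤ Real.exp (L ^ 2 * C ^ 2 / 2) *
          Real.exp (L * ∫ y, g y ∂π0 + L ^ 2 * d * C ^ 2 / 2) :=
          mul_le_mul_of_nonneg_left step5 (Real.exp_nonneg _)
      _ = Real.exp (L * ∫ x, f x ∂π1 + L ^ 2 * (d + 1 : ℕ) * C ^ 2 / 2) := by
          rw [← Real.exp_add, step6]
          congr 1
          push_cast
          ring

lemma aux_joint_law {Ω : Type*} [MeasurableSpace Ω] (μ : Measure Ω) [IsProbabilityMeasure μ]
    (Y : ℕ → Ω → ℝ) (hYmeas : ∀ j, Measurable (Y j))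
    (hYindep : iIndepFun Y μ)
    (hYident : ∀ j, IdentDistrib (Y j) (Y 0) μ μ) :
    ∀ d : ℕ, μ.map (fun ω (j : Fin d) => Y j ω)
      = Measure.pi (fun _ : Fin d => μ.map (Y 0)) := by
  intro d
  have hvec : ∀ n : ℕ, Measurable (fun ω (j : Fin n) => Y j ω) := fun n =>
    measurable_pi_lambda _ fun j => hYmeas j
  induction d with
  | zero =>
    have h1 : IsProbabilityMeasure (μ.map (fun ω (j : Fin 0) => Y j ω)) :=
      Measure.isProbabilityMeasure_map (hvec 0).aemeasurable
    have h2 : IsProbabilityMeasure (Measure.pi (fun _ : Fin 0 => μ.map (Y 0))) := by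
      have : IsProbabilityMeasure (μ.map (Y 0)) :=
        Measure.isProbabilityMeasure_map (hYmeas 0).aemeasurable
      infer_instance
    ext s hs
    rcases s.eq_empty_or_nonempty with rfl | hne
    · simp
    · have huniv : s = Set.univ := by
        obtain ⟨x, hx⟩ := hne
        apply Set.eq_univ_of_forall
        intro y
        rwa [Subsingleton.elim y x]
      rw [huniv, measure_univ, measure_univ]
  | succ d ih =>
    have hν : IsProbabilityMeasure (μ.map (Y 0)) :=
      Measure.isProbabilityMeasure_map (hYmeas 0).aemeasurable
    set ν := μ.map (Y 0) with hνdef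
    set e := MeasurableEquiv.piFinSuccAbove (fun _ : Fin (d+1) => ℝ) (Fin.last d) with he
    have mp : MeasurePreserving e (Measure.pi (fun _ : Fin (d+1) => ν))
        ((ν).prod (Measure.pi fun _ : Fin d => ν)) :=
      measurePreserving_piFinSuccAbove (fun _ : Fin (d+1) => ν) (Fin.last d)
    -- independence of Y d and the vector of earlier ones
    have hdisj : Disjoint ({d} : Finset ℕ) (Finset.range d) := by
      simp [Finset.disjoint_left]
    have hfin := hYindep.indepFun_finset {d} (Finset.range d) hdisj hYmeas
    have hindYd : IndepFun (Y d) (fun ω (j : Fin d) => Y j ω) μ := by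
      have hφ : Measurable (fun v : {x : ℕ // x ∈ ({d} : Finset ℕ)} → ℝ =>
          v ⟨d, Finset.mem_singleton_self d⟩) := measurable_pi_apply _
      have hψ : Measurable (fun v : {x : ℕ // x ∈ Finset.range d} → ℝ =>
          fun j : Fin d => v ⟨(j : ℕ), Finset.mem_range.2 j.isLt⟩) :=
        measurable_pi_lambda _ fun j => measurable_pi_apply _
      exact hfin.comp hφ hψ
    have hmap_pair : μ.map (fun ω => (Y d ω, fun j : Fin d => Y j ω))
        = ν.prod (Measure.pi fun _ : Fin d => ν) := by
      rw [(indepFun_iff_map_prod_eq_prod_map_map (hYmeas d).aemeasurable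
        (hvec d).aemeasurable).1 hindYd]
      rw [ih, (hYident d).map_eq]
    have hcomp : (fun ω => e (fun j : Fin (d+1) => Y j ω))
        = fun ω => (Y d ω, fun j : Fin d => Y j ω) := by
      funext ω
      rw [he]
      simp only [MeasurableEquiv.piFinSuccAbove_apply, Fin.insertNthEquiv_symm_apply,
        Fin.removeNth, Fin.succAbove_last, Fin.val_last, Fin.coe_castSucc]
      simp only [Prod.mk.injEq, true_and]
      funext j
      simp [Fin.removeNth, Fin.succAbove_last]
    have hmape : (μ.map (fun ω (j : Fin (d+1)) => Y j ω)).map e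
        = (Measure.pi (fun _ : Fin (d+1) => ν)).map e := by
      rw [Measure.map_map e.measurable (hvec (d+1)), mp.map_eq]
      rw [show (⇑e ∘ fun ω (j : Fin (d+1)) => Y j ω) = fun ω => e (fun j : Fin (d+1) => Y j ω)
        from rfl, hcomp, hmap_pair]
    have := congrArg (fun m : Measure (ℝ × (Fin d → ℝ)) => m.map e.symm) hmape
    simpa [Measure.map_map e.symm.measurable e.measurable,
      MeasurableEquiv.symm_comp_self, Measure.map_id] using this

lemma aux_rpow_cont {q : ℝ} (hq : 0 ≤ q) : Continuous fun t : ℝ => t ^ q :=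
  continuous_iff_continuousAt.2 fun x => Real.continuousAt_rpow_const x q (Or.inr hq)

lemma aux_phi_mem {p C : ℝ} (hp : 1 ≤ p) (hC : 0 < C) (t : ℝ) :
    0 ≤ (min |t| C) ^ p ∧ (min |t| C) ^ p ≤ C ^ p := by
  have h0 : 0 ≤ min |t| C := le_min (abs_nonneg t) hC.le
  constructor
  · exact Real.rpow_nonneg h0 p
  · exact Real.rpow_le_rpow h0 (min_le_right _ _) (by linarith)

lemma aux_phi_meas {p C : ℝ} (hp : 1 ≤ p) :
    Measurable fun t : ℝ => (min |t| C) ^ p :=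
  ((aux_rpow_cont (by linarith : (0:ℝ) ≤ p)).measurable).comp
    ((continuous_abs.min continuous_const).measurable)

lemma aux_f_meas {p C : ℝ} (hp : 1 ≤ p) (d : ℕ) :
    Measurable fun x : Fin d → ℝ => (∑ j, (min |x j| C) ^ p) ^ (1/p) := by
  apply ((aux_rpow_cont (by positivity : (0:ℝ) ≤ 1/p)).measurable).comp
  apply Finset.measurable_sum
  intro j _
  exact (aux_phi_meas hp).comp (measurable_pi_apply j)

lemma aux_Cp_root {p C : ℝ} (hp : 1 ≤ p) (hC : 0 < C) : (C ^ p) ^ (1/p) = C := by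
  rw [← Real.rpow_mul hC.le, mul_one_div_cancel (by linarith : p ≠ 0), Real.rpow_one]

lemma aux_f_nonneg {p C : ℝ} (hp : 1 ≤ p) (hC : 0 < C) (d : ℕ) (x : Fin d → ℝ) :
    0 ≤ (∑ j, (min |x j| C) ^ p) ^ (1/p) :=
  Real.rpow_nonneg (Finset.sum_nonneg fun j _ => (aux_phi_mem hp hC (x j)).1) _

lemma aux_f_bound {p C : ℝ} (hp : 1 ≤ p) (hC : 0 < C) (d : ℕ) (x : Fin d → ℝ) :
    |(∑ j, (min |x j| C) ^ p) ^ (1/p)| ≤ (d : ℝ) ^ (1/p) * C := by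
  rw [abs_of_nonneg (aux_f_nonneg hp hC d x)]
  have hsum : ∑ j, (min |x j| C) ^ p ≤ (d : ℝ) * C ^ p := by
    calc ∑ j : Fin d, (min |x j| C) ^ p ≤ ∑ _j : Fin d, C ^ p :=
          Finset.sum_le_sum fun j _ => (aux_phi_mem hp hC (x j)).2
      _ = (d : ℝ) * C ^ p := by simp [mul_comm]
  calc (∑ j, (min |x j| C) ^ p) ^ (1/p) ≤ ((d : ℝ) * C ^ p) ^ (1/p) :=
        Real.rpow_le_rpow (Finset.sum_nonneg fun j _ => (aux_phi_mem hp hC (x j)).1)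
          hsum (by positivity)
    _ = (d : ℝ) ^ (1/p) * C := by
        rw [Real.mul_rpow (Nat.cast_nonneg d) (Real.rpow_nonneg hC.le p),
          aux_Cp_root hp hC]

lemma aux_f_diff {p C : ℝ} (hp : 1 ≤ p) (hC : 0 < C) (d : ℕ) (i : Fin d)
    (x y : Fin d → ℝ) (hxy : ∀ j, j ≠ i → x j = y j) :
    |(∑ j, (min |x j| C) ^ p) ^ (1/p) - (∑ j, (min |y j| C) ^ p) ^ (1/p)| ≤ C := by
  have hppos : (0:ℝ) < p := by linarith
  set s := ∑ j ∈ Finset.univ.erase i, (min |x j| C) ^ p with hs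
  have hs' : ∑ j ∈ Finset.univ.erase i, (min |y j| C) ^ p = s := by
    rw [hs]
    apply Finset.sum_congr rfl
    intro j hj
    rw [hxy j (Finset.ne_of_mem_erase hj)]
  have hsnn : 0 ≤ s := Finset.sum_nonneg fun j _ => (aux_phi_mem hp hC (x j)).1
  set a := (min |x i| C) ^ p with ha
  set b := (min |y i| C) ^ p with hb
  have hxsum : ∑ j, (min |x j| C) ^ p = s + a := by
    rw [hs, ha, add_comm]
    exact (Finset.add_sum_erase Finset.univ _ (Finset.mem_univ i)).symm
  have hysum : ∑ j, (min |y j| C) ^ p = s + b := by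
    rw [← hs', hb, add_comm]
    exact (Finset.add_sum_erase Finset.univ _ (Finset.mem_univ i)).symm
  have hann : 0 ≤ a := (aux_phi_mem hp hC (x i)).1
  have hbnn : 0 ≤ b := (aux_phi_mem hp hC (y i)).1
  have haC : a ≤ C ^ p := (aux_phi_mem hp hC (x i)).2
  have hbC : b ≤ C ^ p := (aux_phi_mem hp hC (y i)).2
  have hq1 : 1/p ≤ 1 := by
    rw [div_le_one hppos]; exact hp
  have hq0 : 0 ≤ 1/p := by positivity
  -- main one-sided estimate
  have main : ∀ u v : ℝ, 0 ≤ u → 0 ≤ v → u ≤ C ^ p → v ≤ C ^ p →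
      (s + u) ^ (1/p) - (s + v) ^ (1/p) ≤ C := by
    intro u v hu hv huC hvC
    rcases le_total u v with huv | huv
    · have h1 : (s + u) ^ (1/p) ≤ (s + v) ^ (1/p) :=
        Real.rpow_le_rpow (by linarith) (by linarith) hq0
      linarith [hC.le]
    · have h1 : (s + u) ^ (1/p) ≤ (s + v) ^ (1/p) + (u - v) ^ (1/p) := by
        have : s + u = (s + v) + (u - v) := by ring
        rw [this]
        exact aux_rpow_subadd hq0 hq1 (by linarith) (by linarith)
      have h2 : (u - v) ^ (1/p) ≤ (C ^ p) ^ (1/p) :=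
        Real.rpow_le_rpow (by linarith) (by linarith) hq0
      rw [aux_Cp_root hp hC] at h2
      linarith
  rw [hxsum, hysum, abs_sub_le_iff]
  constructor
  · exact main a b hann hbnn haC hbC
  · exact main b a hbnn hann hbC haC

lemma aux_integral_pos {Ω : Type*} [MeasurableSpace Ω] (μ : Measure Ω) [IsProbabilityMeasure μ]
    {g : Ω → ℝ} (hint : Integrable g μ) (hpos : ∀ᵐ ω ∂μ, 0 < g ω) :
    0 < ∫ ω, g ω ∂μ := by
  rw [integral_pos_iff_support_of_nonneg_ae (hpos.mono fun ω h => h.le) hint]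
  by_contra h
  have h0 : μ (Function.support g) = 0 := by
    simpa [pos_iff_ne_zero] using h
  have hae : ∀ᵐ ω ∂μ, ω ∉ Function.support g := by
    rw [ae_iff]
    simpa [Function.support] using h0
  have hfalse : ∀ᵐ _ω ∂μ, False := by
    filter_upwards [hpos, hae] with ω h1 h2
    exact h2 (Function.mem_support.2 (ne_of_gt h1))
  have : μ Set.univ = 0 := by
    have := hfalse
    rw [ae_iff] at this
    simpa using this
  rw [measure_univ] at this
  exact one_ne_zero this

/-- Fix `p ≥ 1` and assume `0 < |X| ≤ C` a.s. for some `C > 0`.  Then for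
every `ε > 0`, as `d → ∞`,
`P{ |‖X‖_p/E‖X‖_p − 1| ≥ ε } ≤ 2 exp(−ε² d^{2/p−1} μ_p^{2/p} / (2C²) + o(d^{2/p−1}))`;
more precisely, for every `d ≥ 1`,
`P{ |‖X‖_p − E‖X‖_p| ≥ ε E‖X‖_p } ≤ 2 exp(−ε² (E‖X‖_p)² / (2 d C²))`. -/
theorem stmt_14 {Ω : Type*} [MeasurableSpace Ω] (μ : Measure Ω) [IsProbabilityMeasure μ]
    (X : ℕ → Ω → ℝ)
    (hXmeas : ∀ j, Measurable (X j))
    (hindep : iIndepFun X μ)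
    (hident : ∀ j, IdentDistrib (X j) (X 0) μ μ)
    (p : ℝ) (hp : 1 ≤ p)
    (C : ℝ) (hC : 0 < C)
    (hbdd : ∀ᵐ ω ∂μ, 0 < |X 0 ω| ∧ |X 0 ω| ≤ C)
    (μp : ℝ) (hμp : μp = ∫ ω, |X 0 ω| ^ p ∂μ)
    (Np : ℕ → Ω → ℝ)
    (hNp : ∀ d ω, Np d ω = (∑ j ∈ Finset.range d, |X j ω| ^ p) ^ (1 / p)) :
    (∀ ε : ℝ, 0 < ε →
      ∃ e : ℕ → ℝ,
        Tendsto (fun d : ℕ => e d / (d : ℝ) ^ (2 / p - 1)) atTop (nhds 0) ∧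
          ∀ᶠ d : ℕ in atTop,
            (μ {ω | ε ≤ |Np d ω / (∫ ω', Np d ω' ∂μ) - 1|}).toReal ≤
              2 * Real.exp (-(ε ^ 2 * (d : ℝ) ^ (2 / p - 1) * μp ^ (2 / p)) / (2 * C ^ 2)
                + e d))
    ∧ (∀ ε : ℝ, 0 < ε → ∀ d : ℕ, 1 ≤ d →
        (μ {ω | ε * (∫ ω', Np d ω' ∂μ) ≤ |Np d ω - ∫ ω', Np d ω' ∂μ|}).toReal ≤
          2 * Real.exp (-(ε ^ 2 * (∫ ω', Np d ω' ∂μ) ^ 2) / (2 * d * C ^ 2))) := by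
  have hppos : (0:ℝ) < p := by linarith
  set φ : ℝ → ℝ := fun t => (min |t| C) ^ p with hφ
  set f : ∀ d : ℕ, (Fin d → ℝ) → ℝ := fun d x => (∑ j, φ (x j)) ^ (1/p) with hf
  have hfmeas : ∀ d, Measurable (f d) := fun d => aux_f_meas hp d
  have hfB : ∀ d x, |f d x| ≤ (d : ℝ) ^ (1/p) * C := fun d x => aux_f_bound hp hC d x
  have hfdiff : ∀ d (i : Fin d) (x y : Fin d → ℝ), (∀ j, j ≠ i → x j = y j) →
      |f d x - f d y| ≤ C := fun d i x y h => aux_f_diff hp hC d i x y h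
  set ν := μ.map (X 0) with hν
  have hνprob : IsProbabilityMeasure ν := Measure.isProbabilityMeasure_map (hXmeas 0).aemeasurable
  set vec : ∀ d : ℕ, Ω → (Fin d → ℝ) := fun d ω j => X j ω with hvecdef
  have hvecmeas : ∀ d, Measurable (vec d) := fun d =>
    measurable_pi_lambda _ fun j => hXmeas j
  have hlaw : ∀ d, μ.map (vec d) = Measure.pi (fun _ : Fin d => ν) :=
    aux_joint_law μ X hXmeas hindep hident
  -- a.e. bounds for every coordinate
  set S : Set ℝ := abs ⁻¹' Set.Ioc 0 C with hS
  have hSmeas : MeasurableSet S := measurable_abs measurableSet_Ioc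
  have hbdd0 : ∀ᵐ ω ∂μ, X 0 ω ∈ S := by
    filter_upwards [hbdd] with ω h
    exact ⟨h.1, h.2⟩
  have hbdd_all : ∀ᵐ ω ∂μ, ∀ j, 0 < |X j ω| ∧ |X j ω| ≤ C := by
    rw [ae_all_iff]
    intro j
    have h0 : μ (X 0 ⁻¹' Sᶜ) = 0 := by
      rw [ae_iff] at hbdd0
      exact hbdd0
    have hj : μ (X j ⁻¹' Sᶜ) = 0 := by
      have h1 : μ (X j ⁻¹' Sᶜ) = (μ.map (X j)) Sᶜ :=
        (Measure.map_apply (hXmeas j) hSmeas.compl).symm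
      rw [h1, (hident j).map_eq, Measure.map_apply (hXmeas 0) hSmeas.compl, h0]
    have : ∀ᵐ ω ∂μ, X j ω ∈ S := by
      rw [ae_iff]
      exact hj
    filter_upwards [this] with ω h
    exact ⟨h.1, h.2⟩
  have hfeq : ∀ d, ∀ᵐ ω ∂μ, f d (vec d ω) = Np d ω := by
    intro d
    filter_upwards [hbdd_all] with ω h
    have h1 : ∀ j : Fin d, φ (vec d ω j) = |X (j : ℕ) ω| ^ p := by
      intro j
      rw [hφ]
      show (min |X (j:ℕ) ω| C) ^ p = |X (j:ℕ) ω| ^ p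
      rw [min_eq_left (h (j:ℕ)).2]
    rw [hf]
    show (∑ j : Fin d, φ (vec d ω j)) ^ (1/p) = Np d ω
    rw [Finset.sum_congr rfl fun j _ => h1 j, hNp d ω]
    congr 1
    exact Fin.sum_univ_eq_sum_range (fun j => |X j ω| ^ p) d
  have hNpmeas : ∀ d, Measurable (Np d) := by
    intro d
    have : Np d = fun ω => (∑ j ∈ Finset.range d, |X j ω| ^ p) ^ (1/p) := funext (hNp d)
    rw [this]
    apply ((aux_rpow_cont (by positivity : (0:ℝ) ≤ 1/p)).measurable).comp
    apply Finset.measurable_sum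
    intro j _
    exact ((aux_rpow_cont (by linarith : (0:ℝ) ≤ p)).measurable).comp (hXmeas j).abs
  have hfvint : ∀ d, Integrable (fun ω => f d (vec d ω)) μ := fun d =>
    aux_integrable_of_bdd ((hfmeas d).comp (hvecmeas d)) (fun ω => hfB d (vec d ω))
  have hNpint : ∀ d, Integrable (Np d) μ := fun d => (hfvint d).congr (hfeq d)
  have hE : ∀ d, ∫ ω', Np d ω' ∂μ = ∫ x, f d x ∂(Measure.pi (fun _ : Fin d => ν)) := by
    intro d
    rw [← hlaw d, integral_map (hvecmeas d).aemeasurable (hfmeas d).aestronglyMeasurable]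
    exact (integral_congr_ae (hfeq d)).symm
  -- positivity of expected norm
  have hEpos : ∀ d : ℕ, 1 ≤ d → 0 < ∫ ω', Np d ω' ∂μ := by
    intro d hd
    apply aux_integral_pos μ (hNpint d)
    filter_upwards [hbdd_all] with ω h
    rw [hNp d ω]
    apply Real.rpow_pos_of_pos _ (1/p)
    have h0mem : 0 ∈ Finset.range d := Finset.mem_range.2 hd
    have hterm : 0 < |X 0 ω| ^ p := Real.rpow_pos_of_pos (h 0).1 p
    have := Finset.single_le_sum (f := fun j => |X j ω| ^ p)
      (fun j _ => Real.rpow_nonneg (abs_nonneg _) p) h0mem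
    linarith
  -- measure transfer
  have htransfer : ∀ (d : ℕ) (t E : ℝ),
      μ {ω | t ≤ |Np d ω - E|}
        = (Measure.pi (fun _ : Fin d => ν)) {x | t ≤ |f d x - E|} := by
    intro d t E
    have hset : MeasurableSet {x : Fin d → ℝ | t ≤ |f d x - E|} :=
      measurableSet_le measurable_const ((hfmeas d).sub_const E).abs
    have h1 : {ω | t ≤ |Np d ω - E|} =ᵐ[μ] {ω | t ≤ |f d (vec d ω) - E|} := by
      apply Filter.eventuallyEq_set.2
      filter_upwards [hfeq d] with ω h
      simp only [Set.mem_setOf_eq, h]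
    rw [measure_congr h1]
    have h2 : {ω | t ≤ |f d (vec d ω) - E|} = vec d ⁻¹' {x | t ≤ |f d x - E|} := rfl
    rw [h2, ← Measure.map_apply (hvecmeas d) hset, hlaw d]
  -- key concentration estimate (part 2)
  have key : ∀ ε : ℝ, 0 < ε → ∀ d : ℕ, 1 ≤ d →
      (μ {ω | ε * (∫ ω', Np d ω' ∂μ) ≤ |Np d ω - ∫ ω', Np d ω' ∂μ|}).toReal ≤
        2 * Real.exp (-(ε ^ 2 * (∫ ω', Np d ω' ∂μ) ^ 2) / (2 * d * C ^ 2)) := by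
    intro ε hε d hd
    set E := ∫ ω', Np d ω' ∂μ with hEdef
    have hEp := hEpos d hd
    have hdpos : (0:ℝ) < (d:ℝ) := by exact_mod_cast hd
    have hv : (0:ℝ) < (d:ℝ) * C ^ 2 := by positivity
    have hmgf : ∀ L : ℝ, ∫ x, Real.exp (L * f d x) ∂(Measure.pi (fun _ : Fin d => ν)) ≤
        Real.exp (L * ∫ x, f d x ∂(Measure.pi (fun _ : Fin d => ν))
          + L ^ 2 * ((d:ℝ) * C ^ 2) / 2) := by
      intro L
      refine le_of_le_of_eq (aux_mgf_pi ν hC.le d (f d) (hfmeas d) _ (hfB d) (hfdiff d) L) ?_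
      congr 1
      ring
    have ht : 0 < ε * E := mul_pos hε hEp
    have tail := aux_chernoff_two (Measure.pi (fun _ : Fin d => ν)) (hfmeas d)
      (hfB d) hv hmgf ht
    rw [← hE d, ← hEdef] at tail
    rw [htransfer d (ε * E) E]
    refine le_of_le_of_eq tail ?_
    congr 1
    rw [mul_pow]
    ring
  refine ⟨?_, key⟩
  -- part 1
  intro ε hε
  -- law of large numbers machinery
  set Z : ℕ → Ω → ℝ := fun j ω => φ (X j ω) with hZ
  have hφmeas : Measurable φ := aux_phi_meas hp
  have hZmeas : ∀ j, Measurable (Z j) := fun j => hφmeas.comp (hXmeas j)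
  have hZindep : iIndepFun Z μ :=
    hindep.comp (fun _ => φ) (fun _ => hφmeas)
  have hZpair : Pairwise (fun i j => IndepFun (Z i) (Z j) μ) := fun i j hij => hZindep.indepFun hij
  have hZbdd : ∀ j ω, |Z j ω| ≤ C ^ p := by
    intro j ω
    have h := aux_phi_mem hp hC (X j ω)
    rw [hZ]
    show |(min |X j ω| C) ^ p| ≤ C ^ p
    rw [abs_of_nonneg h.1]
    exact h.2
  have hZident : ∀ j, IdentDistrib (Z j) (Z 0) μ μ := fun j => (hident j).comp hφmeas
  have hZint : Integrable (Z 0) μ := aux_integrable_of_bdd (hZmeas 0) (hZbdd 0)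
  have hZmean : ∫ ω, Z 0 ω ∂μ = μp := by
    rw [hμp]
    apply integral_congr_ae
    filter_upwards [hbdd] with ω h
    show φ (X 0 ω) = |X 0 ω| ^ p
    rw [hφ]
    show (min |X 0 ω| C) ^ p = |X 0 ω| ^ p
    rw [min_eq_left h.2]
  have hμppos : 0 < μp := by
    rw [← hZmean]
    apply aux_integral_pos μ hZint
    filter_upwards [hbdd] with ω h
    show 0 < φ (X 0 ω)
    rw [hφ]
    show 0 < (min |X 0 ω| C) ^ p
    exact Real.rpow_pos_of_pos (lt_min h.1 hC) p
  have hSLLN := strong_law_ae Z hZint hZpair hZident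
  rw [hZmean] at hSLLN
  have hFeq : ∀ d : ℕ, 1 ≤ d → ∀ ω : Ω, f d (vec d ω) / (d:ℝ) ^ (1/p)
      = ((∑ i ∈ Finset.range d, Z i ω) / (d:ℝ)) ^ (1/p) := by
    intro d hd ω
    have hdpos : (0:ℝ) < (d:ℝ) := by exact_mod_cast hd
    have hsnn : 0 ≤ ∑ i ∈ Finset.range d, Z i ω :=
      Finset.sum_nonneg fun i _ => (aux_phi_mem hp hC (X i ω)).1
    rw [Real.div_rpow hsnn hdpos.le]
    congr 1
    show (∑ j : Fin d, φ (vec d ω j)) ^ (1/p) = (∑ i ∈ Finset.range d, Z i ω) ^ (1/p)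
    congr 1
    exact Fin.sum_univ_eq_sum_range (fun j => Z j ω) d
  have hconv : ∀ᵐ ω ∂μ, Tendsto (fun d : ℕ => f d (vec d ω) / (d:ℝ) ^ (1/p)) atTop
      (nhds (μp ^ (1/p))) := by
    filter_upwards [hSLLN] with ω hω
    have hω' : Tendsto (fun n : ℕ => (∑ i ∈ Finset.range n, Z i ω) / (n:ℝ)) atTop
        (nhds μp) := by
      apply hω.congr
      intro n
      rw [smul_eq_mul, inv_mul_eq_div]
    have hcont : ContinuousAt (fun t : ℝ => t ^ (1/p)) μp :=
      Real.continuousAt_rpow_const μp (1/p) (Or.inl (ne_of_gt hμppos))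
    have h1 : Tendsto (fun n : ℕ => ((∑ i ∈ Finset.range n, Z i ω) / (n:ℝ)) ^ (1/p))
        atTop (nhds (μp ^ (1/p))) := hcont.tendsto.comp hω'
    apply h1.congr'
    filter_upwards [eventually_ge_atTop 1] with d hd
    exact (hFeq d hd ω).symm
  have hFbound : ∀ (d : ℕ) (ω : Ω), ‖f d (vec d ω) / (d:ℝ) ^ (1/p)‖ ≤ C := by
    intro d ω
    rw [Real.norm_eq_abs, abs_div]
    rcases Nat.eq_zero_or_pos d with rfl | hd
    · simp only [Nat.cast_zero]
      rw [Real.zero_rpow (by positivity : (1:ℝ)/p ≠ 0)]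
      simp [hC.le]
    · have hdpos : (0:ℝ) < (d:ℝ) := by exact_mod_cast hd
      have hrp : (0:ℝ) < (d:ℝ) ^ (1/p) := Real.rpow_pos_of_pos hdpos _
      rw [abs_of_pos hrp, div_le_iff₀ hrp]
      calc |f d (vec d ω)| ≤ (d:ℝ) ^ (1/p) * C := hfB d _
        _ = C * (d:ℝ) ^ (1/p) := mul_comm _ _
  have hDCT := tendsto_integral_of_dominated_convergence (μ := μ)
    (F := fun d ω => f d (vec d ω) / (d:ℝ) ^ (1/p)) (f := fun _ => μp ^ (1/p))
    (bound := fun _ => C)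
    (fun d => (((hfmeas d).comp (hvecmeas d)).div_const _).aestronglyMeasurable)
    (integrable_const C) (fun d => ae_of_all _ (hFbound d)) hconv
  have hconst : ∫ _ω, μp ^ (1/p) ∂μ = μp ^ (1/p) := by simp
  rw [hconst] at hDCT
  have hint_eq : ∀ d : ℕ, ∫ ω, f d (vec d ω) / (d:ℝ) ^ (1/p) ∂μ
      = (∫ ω', Np d ω' ∂μ) / (d:ℝ) ^ (1/p) := by
    intro d
    rw [integral_div]
    congr 1
    exact integral_congr_ae (hfeq d)
  have hLLN : Tendsto (fun d : ℕ => (∫ ω', Np d ω' ∂μ) / (d:ℝ) ^ (1/p)) atTop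
      (nhds (μp ^ (1/p))) := hDCT.congr hint_eq
  -- conclusion of part 1
  refine ⟨fun d => ε ^ 2 * (d:ℝ) ^ (2/p - 1) * μp ^ (2/p) / (2 * C ^ 2)
    - ε ^ 2 * (∫ ω', Np d ω' ∂μ) ^ 2 / (2 * (d:ℝ) * C ^ 2), ?_, ?_⟩
  · -- the error term is o(d^{2/p-1})
    have h2exp : (μp ^ (1/p)) ^ 2 = μp ^ (2/p) := by
      rw [← Real.rpow_natCast (μp ^ (1/p)) 2, ← Real.rpow_mul hμppos.le]
      congr 1
      push_cast
      ring
    have hmain : Tendsto (fun d : ℕ => ε ^ 2 / (2 * C ^ 2) *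
        (μp ^ (2/p) - ((∫ ω', Np d ω' ∂μ) / (d:ℝ) ^ (1/p)) ^ 2)) atTop
        (nhds (ε ^ 2 / (2 * C ^ 2) * (μp ^ (2/p) - (μp ^ (1/p)) ^ 2))) :=
      (tendsto_const_nhds.sub (hLLN.pow 2)).const_mul _
    have hzero : ε ^ 2 / (2 * C ^ 2) * (μp ^ (2/p) - (μp ^ (1/p)) ^ 2) = 0 := by
      rw [h2exp]; ring
    rw [hzero] at hmain
    apply hmain.congr'
    filter_upwards [eventually_ge_atTop 1] with d hd
    have hdpos : (0:ℝ) < (d:ℝ) := by exact_mod_cast hd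
    have hr : (0:ℝ) < (d:ℝ) ^ (2/p - 1) := Real.rpow_pos_of_pos hdpos _
    have hq : (0:ℝ) < (d:ℝ) ^ (1/p) := Real.rpow_pos_of_pos hdpos _
    have hq2 : ((d:ℝ) ^ (1/p)) ^ 2 = (d:ℝ) * (d:ℝ) ^ (2/p - 1) := by
      rw [← Real.rpow_natCast ((d:ℝ) ^ (1/p)) 2, ← Real.rpow_mul hdpos.le]
      rw [show (1/p) * ((2:ℕ):ℝ) = 1 + (2/p - 1) by push_cast; ring]
      rw [Real.rpow_add hdpos, Real.rpow_one]
    show ε ^ 2 / (2 * C ^ 2) * (μp ^ (2/p) - ((∫ ω', Np d ω' ∂μ) / (d:ℝ) ^ (1/p)) ^ 2)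
      = (ε ^ 2 * (d:ℝ) ^ (2/p - 1) * μp ^ (2/p) / (2 * C ^ 2)
          - ε ^ 2 * (∫ ω', Np d ω' ∂μ) ^ 2 / (2 * (d:ℝ) * C ^ 2)) / (d:ℝ) ^ (2/p - 1)
    rw [div_pow, hq2, eq_div_iff hr.ne']
    field_simp
  · -- eventual bound
    filter_upwards [eventually_ge_atTop 1] with d hd
    have hkey := key ε hε d hd
    have hEp := hEpos d hd
    have hset : {ω | ε ≤ |Np d ω / (∫ ω', Np d ω' ∂μ) - 1|}
        = {ω | ε * (∫ ω', Np d ω' ∂μ) ≤ |Np d ω - ∫ ω', Np d ω' ∂μ|} := by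
      ext ω
      simp only [Set.mem_setOf_eq]
      rw [show Np d ω / (∫ ω', Np d ω' ∂μ) - 1
        = (Np d ω - ∫ ω', Np d ω' ∂μ) / (∫ ω', Np d ω' ∂μ) by field_simp]
      rw [abs_div, abs_of_pos hEp, le_div_iff₀ hEp]
    rw [hset]
    calc (μ {ω | ε * (∫ ω', Np d ω' ∂μ) ≤ |Np d ω - ∫ ω', Np d ω' ∂μ|}).toReal
        ≤ 2 * Real.exp (-(ε ^ 2 * (∫ ω', Np d ω' ∂μ) ^ 2) / (2 * (d:ℝ) * C ^ 2)) := hkey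
      _ = 2 * Real.exp (-(ε ^ 2 * (d : ℝ) ^ (2/p - 1) * μp ^ (2/p)) / (2 * C ^ 2)
          + (ε ^ 2 * (d:ℝ) ^ (2/p - 1) * μp ^ (2/p) / (2 * C ^ 2)
            - ε ^ 2 * (∫ ω', Np d ω' ∂μ) ^ 2 / (2 * (d:ℝ) * C ^ 2))) := by
        congr 1
        ring
end

section
/- Fix p > 0 with μ_p = E|X|^p < ∞, and fix n ≥ 1. Let X_1, …, X_n be i.i.d. copies of X = (X_1, …, X_d), an ℝ^d-valued random vector with i.i.d. components. Then, as d → ∞, d^{−1/p} ( max_{1≤i≤n} ‖X_i‖_p − min_{1≤i≤n} ‖X_i‖_p ) → 0 in probability; and if moreover 0 < μ_p, then ( max_{1≤i≤n} ‖X_i‖_p ) / ( min_{1≤i≤n} ‖X_i‖_p ) → 1 in probability. -/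
open MeasureTheory ProbabilityTheory Filter Topology

lemma aux_tendsto_sup' {ι : Type*} {f : ι → ℕ → ℝ} {L : ℝ}
    {s : Finset ι} (hs : s.Nonempty)
    (h : ∀ i ∈ s, Tendsto (f i) atTop (𝓝 L)) :
    Tendsto (fun d => s.sup' hs (fun i => f i d)) atTop (𝓝 L) := by
  revert h
  induction hs using Finset.Nonempty.cons_induction with
  | singleton a => intro h; simpa using h a (by simp)
  | cons a s ha hs ih =>
    intro h
    simp only [Finset.sup'_cons hs]
    have h1 : Tendsto (f a) atTop (𝓝 L) := h a (by simp)
    have h2 := ih (fun i hi => h i (Finset.mem_cons_of_mem hi))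
    simpa using h1.max h2

lemma aux_tendsto_inf' {ι : Type*} {f : ι → ℕ → ℝ} {L : ℝ}
    {s : Finset ι} (hs : s.Nonempty)
    (h : ∀ i ∈ s, Tendsto (f i) atTop (𝓝 L)) :
    Tendsto (fun d => s.inf' hs (fun i => f i d)) atTop (𝓝 L) := by
  revert h
  induction hs using Finset.Nonempty.cons_induction with
  | singleton a => intro h; simpa using h a (by simp)
  | cons a s ha hs ih =>
    intro h
    simp only [Finset.inf'_cons hs]
    have h1 : Tendsto (f a) atTop (𝓝 L) := h a (by simp)
    have h2 := ih (fun i hi => h i (Finset.mem_cons_of_mem hi))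
    simpa using h1.min h2

lemma aux_measurable_inf' {δ : Type*} [MeasurableSpace δ] {ι : Type*} {s : Finset ι}
    (hs : s.Nonempty) {f : ι → δ → ℝ} (hf : ∀ n ∈ s, Measurable (f n)) :
    Measurable (s.inf' hs f) :=
  Finset.inf'_induction hs _ (fun _f hf _g hg => hf.inf hg) fun n hn => hf n hn

/-- Fix `p > 0` with `μ_p = E|X|^p < ∞` and `n ≥ 1`.  For `X_1, …, X_n`
i.i.d. copies of the `d`-dimensional vector `X` (with i.i.d. components `X i j`), as
`d → ∞`, `d^{−1/p}(max_i ‖X_i‖_p − min_i ‖X_i‖_p) → 0` in probability, and if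
moreover `0 < μ_p`, then `(max_i ‖X_i‖_p)/(min_i ‖X_i‖_p) → 1` in probability. -/
theorem stmt_16 {Ω : Type*} [MeasurableSpace Ω] (μ : Measure Ω) [IsProbabilityMeasure μ]
    (X : ℕ → ℕ → Ω → ℝ)
    (hXmeas : ∀ i j, Measurable (X i j))
    (hindep : iIndepFun (fun q : ℕ × ℕ => X q.1 q.2) μ)
    (hident : ∀ i j, IdentDistrib (X i j) (X 0 0) μ μ)
    (p : ℝ) (hp : 0 < p)
    (hmom : Integrable (fun ω => |X 0 0 ω| ^ p) μ)
    (μp : ℝ) (hμp : μp = ∫ ω, |X 0 0 ω| ^ p ∂μ)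
    (n : ℕ) (hn : 0 < n)
    (Np : ℕ → ℕ → Ω → ℝ)
    (hNp : ∀ i d ω, Np i d ω = (∑ j ∈ Finset.range d, |X i j ω| ^ p) ^ (1 / p)) :
    (∀ ε : ℝ, 0 < ε →
      Tendsto
        (fun d : ℕ =>
          μ {ω | ε ≤ |(d : ℝ) ^ (-(1 / p)) *
            ((Finset.range n).sup' (Finset.nonempty_range_iff.mpr hn.ne') (fun i => Np i d ω)
              - (Finset.range n).inf' (Finset.nonempty_range_iff.mpr hn.ne')
                  (fun i => Np i d ω))|})
        atTop (nhds 0))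
    ∧ (0 < μp → ∀ ε : ℝ, 0 < ε →
        Tendsto
          (fun d : ℕ =>
            μ {ω | ε ≤ |(Finset.range n).sup' (Finset.nonempty_range_iff.mpr hn.ne')
                  (fun i => Np i d ω) /
                (Finset.range n).inf' (Finset.nonempty_range_iff.mpr hn.ne')
                  (fun i => Np i d ω) - 1|})
          atTop (nhds 0)) := by
  classical
  have hne : (Finset.range n).Nonempty := Finset.nonempty_range_iff.mpr hn.ne'
  set u : ℝ → ℝ := fun x => |x| ^ p with hu_def
  have hu : Continuous u := continuous_abs.rpow_const fun x => Or.inr hp.le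
  have hYmeas : ∀ i j, Measurable (fun ω => |X i j ω| ^ p) :=
    fun i j => hu.measurable.comp (hXmeas i j)
  -- strong law for each i
  have hslln : ∀ i, ∀ᵐ ω ∂μ,
      Tendsto (fun d : ℕ => (∑ j ∈ Finset.range d, |X i j ω| ^ p) / d) atTop (𝓝 μp) := by
    intro i
    have hid0 : ∀ j, IdentDistrib (u ∘ X i j) (u ∘ X 0 0) μ μ :=
      fun j => (hident i j).comp hu.measurable
    have hint : Integrable (u ∘ X i 0) μ := (hid0 0).integrable_iff.mpr hmom
    have hid : ∀ j, IdentDistrib (u ∘ X i j) (u ∘ X i 0) μ μ :=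
      fun j => (hid0 j).trans (hid0 0).symm
    have hpind : Pairwise (Function.onFun (IndepFun · · μ) fun j => u ∘ X i j) := by
      intro j k hjk
      exact (hindep.indepFun (show ((i, j) : ℕ × ℕ) ≠ (i, k) by simp [hjk])).comp
        hu.measurable hu.measurable
    have h := strong_law_ae_real (fun j => u ∘ X i j) hint hpind hid
    have hI : (∫ ω, (u ∘ X i 0) ω ∂μ) = μp := by
      rw [hμp]; exact (hid0 0).integral_eq
    rw [hI] at h
    exact h
  have hae : ∀ᵐ ω ∂μ, ∀ i,
      Tendsto (fun d : ℕ => (∑ j ∈ Finset.range d, |X i j ω| ^ p) / d) atTop (𝓝 μp) :=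
    ae_all_iff.mpr hslln
  -- basic nonneg facts
  have hSnonneg : ∀ i d ω, (0 : ℝ) ≤ ∑ j ∈ Finset.range d, |X i j ω| ^ p :=
    fun i d ω => Finset.sum_nonneg fun j _ => Real.rpow_nonneg (abs_nonneg _) p
  have hcnonneg : ∀ d : ℕ, (0 : ℝ) ≤ (d : ℝ) ^ (-(1 / p)) :=
    fun d => Real.rpow_nonneg (Nat.cast_nonneg d) _
  -- key identity: (d : ℝ) ^ (-(1/p)) * Np i d ω = (S i d ω / d) ^ (1/p)
  have hkey : ∀ (i d : ℕ) (ω : Ω), (d : ℝ) ^ (-(1 / p)) * Np i d ω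
      = ((∑ j ∈ Finset.range d, |X i j ω| ^ p) / d) ^ (1 / p) := by
    intro i d ω
    rw [hNp, Real.div_rpow (hSnonneg i d ω) (Nat.cast_nonneg d),
      Real.rpow_neg (Nat.cast_nonneg d)]
    ring
  -- a.e. limit of normalized quantities
  set L : ℝ := μp ^ (1 / p) with hL_def
  have haeg : ∀ᵐ ω ∂μ, ∀ i,
      Tendsto (fun d : ℕ => (d : ℝ) ^ (-(1 / p)) * Np i d ω) atTop (𝓝 L) := by
    filter_upwards [hae] with ω hω i
    have := (hω i).rpow_const (Or.inr (by positivity : (0:ℝ) ≤ 1 / p))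
    simpa only [← hkey] using this
  -- measurability of Np
  have hNpMeas : ∀ i d, Measurable (Np i d) := by
    intro i d
    have : Np i d = fun ω => (∑ j ∈ Finset.range d, |X i j ω| ^ p) ^ (1 / p) :=
      funext (hNp i d)
    rw [this]
    exact (Real.continuous_rpow_const (by positivity)).measurable.comp
      (Finset.measurable_sum _ fun j _ => hYmeas i j)
  have hsupMeas : ∀ d, Measurable fun ω =>
      (Finset.range n).sup' hne (fun i => Np i d ω) := by
    intro d
    have h := Finset.measurable_sup' hne fun i (_ : i ∈ Finset.range n) => hNpMeas i d
    have he : ((Finset.range n).sup' hne fun i => Np i d)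
        = fun ω => (Finset.range n).sup' hne (fun i => Np i d ω) :=
      funext fun ω => Finset.sup'_apply hne _ ω
    rwa [he] at h
  have hinfMeas : ∀ d, Measurable fun ω =>
      (Finset.range n).inf' hne (fun i => Np i d ω) := by
    intro d
    have h := aux_measurable_inf' hne fun i (_ : i ∈ Finset.range n) => hNpMeas i d
    have he : ((Finset.range n).inf' hne fun i => Np i d)
        = fun ω => (Finset.range n).inf' hne (fun i => Np i d ω) :=
      funext fun ω => Finset.inf'_apply hne _ ω
    rwa [he] at h
  -- scaling commutes with sup'/inf'
  have hsup_mul : ∀ (c : ℝ), 0 ≤ c → ∀ d (ω : Ω),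
      c * (Finset.range n).sup' hne (fun i => Np i d ω)
        = (Finset.range n).sup' hne (fun i => c * Np i d ω) := by
    intro c hc d ω
    exact Finset.comp_sup'_eq_sup'_comp hne (fun x => c * x) (fun x y => mul_max_of_nonneg x y hc)
  have hinf_mul : ∀ (c : ℝ), 0 ≤ c → ∀ d (ω : Ω),
      c * (Finset.range n).inf' hne (fun i => Np i d ω)
        = (Finset.range n).inf' hne (fun i => c * Np i d ω) := by
    intro c hc d ω
    exact Finset.apply_inf'_eq_inf'_comp hne (fun x => c * x) (fun x y => mul_min_of_nonneg x y hc)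
  constructor
  · -- Part 1
    set F : ℕ → Ω → ℝ := fun d ω => (d : ℝ) ^ (-(1 / p)) *
      ((Finset.range n).sup' hne (fun i => Np i d ω)
        - (Finset.range n).inf' hne (fun i => Np i d ω)) with hF_def
    have hFmeas : ∀ d, AEStronglyMeasurable (F d) μ := fun d =>
      (measurable_const.mul ((hsupMeas d).sub (hinfMeas d))).aestronglyMeasurable
    have hFae : ∀ᵐ ω ∂μ, Tendsto (fun d => F d ω) atTop (𝓝 0) := by
      filter_upwards [haeg] with ω hω
      have hFeq : ∀ d, F d ω
          = (Finset.range n).sup' hne (fun i => (d : ℝ) ^ (-(1 / p)) * Np i d ω)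
            - (Finset.range n).inf' hne (fun i => (d : ℝ) ^ (-(1 / p)) * Np i d ω) := by
        intro d
        rw [hF_def]
        simp only [mul_sub, hsup_mul _ (hcnonneg d) d ω, hinf_mul _ (hcnonneg d) d ω]
      have h1 : Tendsto (fun d : ℕ =>
          (Finset.range n).sup' hne (fun i => (d : ℝ) ^ (-(1 / p)) * Np i d ω)) atTop (𝓝 L) :=
        aux_tendsto_sup' hne fun i _ => hω i
      have h2 : Tendsto (fun d : ℕ =>
          (Finset.range n).inf' hne (fun i => (d : ℝ) ^ (-(1 / p)) * Np i d ω)) atTop (𝓝 L) :=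
        aux_tendsto_inf' hne fun i _ => hω i
      have := h1.sub h2
      rw [sub_self] at this
      exact this.congr fun d => (hFeq d).symm
    have hTIM : TendstoInMeasure μ F atTop (fun _ => (0 : ℝ)) :=
      tendstoInMeasure_of_tendsto_ae hFmeas hFae
    intro ε hε
    have := tendstoInMeasure_iff_dist.mp hTIM ε hε
    simpa only [Real.dist_eq, sub_zero] using this
  · -- Part 2
    intro hμppos ε hε
    have hLpos : 0 < L := Real.rpow_pos_of_pos hμppos _
    set R : ℕ → Ω → ℝ := fun d ω =>
      (Finset.range n).sup' hne (fun i => Np i d ω) /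
        (Finset.range n).inf' hne (fun i => Np i d ω) with hR_def
    have hRmeas : ∀ d, AEStronglyMeasurable (R d) μ := fun d =>
      ((hsupMeas d).div (hinfMeas d)).aestronglyMeasurable
    have hRae : ∀ᵐ ω ∂μ, Tendsto (fun d => R d ω) atTop (𝓝 1) := by
      filter_upwards [haeg] with ω hω
      have h1 : Tendsto (fun d : ℕ =>
          (Finset.range n).sup' hne (fun i => (d : ℝ) ^ (-(1 / p)) * Np i d ω)) atTop (𝓝 L) :=
        aux_tendsto_sup' hne fun i _ => hω i
      have h2 : Tendsto (fun d : ℕ =>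
          (Finset.range n).inf' hne (fun i => (d : ℝ) ^ (-(1 / p)) * Np i d ω)) atTop (𝓝 L) :=
        aux_tendsto_inf' hne fun i _ => hω i
      have hdiv := h1.div h2 hLpos.ne'
      rw [div_self hLpos.ne'] at hdiv
      apply hdiv.congr'
      filter_upwards [eventually_ge_atTop 1] with d hd
      have hcpos : 0 < (d : ℝ) ^ (-(1 / p)) :=
        Real.rpow_pos_of_pos (by exact_mod_cast hd) _
      simp only [Pi.div_apply, hR_def]
      rw [← hsup_mul _ (hcnonneg d) d ω, ← hinf_mul _ (hcnonneg d) d ω,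
        mul_div_mul_left _ _ hcpos.ne']
    have hTIM : TendstoInMeasure μ R atTop (fun _ => (1 : ℝ)) :=
      tendstoInMeasure_of_tendsto_ae hRmeas hRae
    have := tendstoInMeasure_iff_dist.mp hTIM ε hε
    simpa only [Real.dist_eq] using this
end
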